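/- arXiv:1201.6116 — 4 statements merged into one kernel-verified Lean document; each statement's English description precedes it below -/
import Mathlib

section
/- The generating function D(z) = sum_n D_n z^n, where D_n = sum_{k=0}^n binomial(n-k,k)^2, satisfies D(z)^2 * (z^4 - 2z^3 - z^2 - 2z + 1) = 1; equivalently D(z) = 1/sqrt(z^4 - 2z^3 - z^2 - 2z + 1) as formal power series. -/
open PowerSeries Finset

noncomputable def ch (a b : ℕ) : ℚ := (Nat.choose a b : ℚ)

lemma chL1 (s k : ℕ) (h : k ≤ s + 1) :
    ch (s+1) k * ((s:ℚ)+1-k) = ch s k * ((s:ℚ)+1) := by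
  have h1 := Nat.choose_mul_succ_eq s k
  have h2 : ((s + 1 - k : ℕ) : ℚ) = (s:ℚ)+1-k := by push_cast [Nat.cast_sub h]; ring
  have h3 := congrArg (fun x : ℕ => (x : ℚ)) h1
  push_cast at h3
  rw [ch, ch, ← h2]
  linarith [h3]

lemma chself (a : ℕ) : ch a a = 1 := by rw [ch, Nat.choose_self]; norm_num

lemma chzero {a b : ℕ} (h : a < b) : ch a b = 0 := by
  rw [ch, Nat.choose_eq_zero_of_lt h]; norm_num

lemma v1 (k : ℕ) : ch (k+1) k = (k:ℚ)+1 := by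
  rw [ch, Nat.choose_succ_self_right]; push_cast; ring

lemma v2 (k : ℕ) : ch (k+2) k = ((k:ℚ)+2)*((k:ℚ)+1)/2 := by
  have h := chL1 (k+1) k (by omega)
  rw [show k+1+1 = k+2 from rfl, v1] at h
  push_cast at h
  linear_combination h/2

lemma v3 (k : ℕ) : ch (k+3) k = ((k:ℚ)+3)*((k:ℚ)+2)*((k:ℚ)+1)/6 := by
  have h := chL1 (k+2) k (by omega)
  rw [show k+2+1 = k+3 from rfl, v2] at h
  push_cast at h
  linear_combination h/3

lemma v4 (k : ℕ) : ch (k+4) k = ((k:ℚ)+4)*((k:ℚ)+3)*((k:ℚ)+2)*((k:ℚ)+1)/24 := by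
  have h := chL1 (k+3) k (by omega)
  rw [show k+3+1 = k+4 from rfl, v3] at h
  push_cast at h
  linear_combination h/4

lemma w2 (k : ℕ) : ch (k+2) (k+1) = (k:ℚ)+2 := by
  rw [show k+2 = (k+1)+1 from rfl, ch, Nat.choose_succ_self_right]; push_cast; ring

lemma w3 (k : ℕ) : ch (k+3) (k+1) = ((k:ℚ)+3)*((k:ℚ)+2)/2 := by
  have h := chL1 (k+2) (k+1) (by omega)
  rw [show k+2+1 = k+3 from rfl, w2] at h
  push_cast at h
  linear_combination h/2

noncomputable def Gf (n k : ℕ) : ℚ :=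
  (-2*(k:ℚ))*ch (n+1-k) k*ch (n+1-k) k
  + (-2*(k:ℚ)-(3/2)*(k:ℚ)^2)*ch (n+1-k) k*ch (n-k) k
  + (4*(k:ℚ)-(5/2)*(k:ℚ)^2-(3/2)*(k:ℚ)^3)*ch (n+1-k) k*ch (n-1-k) k
  + (-3*(k:ℚ)+(9/2)*(k:ℚ)^2-(3/2)*(k:ℚ)^3)*ch (n+1-k) k*ch (n-2-k) k
  + (4*(k:ℚ)+(5/2)*(k:ℚ)^2+(3/2)*(k:ℚ)^3)*ch (n-k) k*ch (n-k) k
  + ((3/2)*(k:ℚ)^3)*ch (n-k) k*ch (n-1-k) k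
  + (-2*(k:ℚ)-3*(k:ℚ)^2)*ch (n-1-k) k*ch (n-1-k) k
  + (k:ℚ)*ch (n-2-k) k*ch (n-2-k) k

noncomputable def Tf (n k : ℕ) : ℚ :=
  ((n:ℚ)+1)*ch (n+1-k) k^2 - (2*(n:ℚ)+1)*ch (n-k) k^2 - (n:ℚ)*ch (n-1-k) k^2
  - (2*(n:ℚ)-1)*ch (n-2-k) k^2 + ((n:ℚ)-1)*ch (n-3-k) k^2

lemma keyB3 (k : ℕ) : Tf (2*k+3) k = Gf (2*k+3) (k+1) - Gf (2*k+3) k := by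
  rw [Tf, Gf, Gf,
      show 2*k+3+1-k = k+4 from by omega, show 2*k+3-k = k+3 from by omega,
      show 2*k+3-1-k = k+2 from by omega, show 2*k+3-2-k = k+1 from by omega,
      show 2*k+3-3-k = k from by omega,
      show 2*k+3+1-(k+1) = k+3 from by omega, show 2*k+3-(k+1) = k+2 from by omega,
      show 2*k+3-1-(k+1) = k+1 from by omega, show 2*k+3-2-(k+1) = k from by omega]
  rw [v4 k, v3 k, v2 k, v1 k, w3 k, w2 k, chself, chself, chzero (show k < k+1 from by omega)]
  push_cast
  ring

lemma keyB2 (j : ℕ) : Tf (2*j+4) (j+1) = Gf (2*j+4) (j+2) - Gf (2*j+4) (j+1) := by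
  rw [Tf, Gf, Gf,
      show 2*j+4+1-(j+1) = j+4 from by omega, show 2*j+4-(j+1) = j+3 from by omega,
      show 2*j+4-1-(j+1) = j+2 from by omega, show 2*j+4-2-(j+1) = j+1 from by omega,
      show 2*j+4-3-(j+1) = j from by omega,
      show 2*j+4+1-(j+2) = j+3 from by omega, show 2*j+4-(j+2) = j+2 from by omega,
      show 2*j+4-1-(j+2) = j+1 from by omega, show 2*j+4-2-(j+2) = j from by omega]
  have A1 := v3 (j+1); rw [show j+1+3 = j+4 from by omega] at A1
  have A2 := v2 (j+1); rw [show j+1+2 = j+3 from by omega] at A2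
  have A3 := v1 (j+1); rw [show j+1+1 = j+2 from by omega] at A3
  have B1 := w2 (j+1); rw [show j+1+2 = j+3 from by omega, show j+1+1 = j+2 from by omega] at B1
  rw [A1, A2, A3, B1, chself, chself, chzero (show j < j+1 from by omega),
      chzero (show j < j+2 from by omega), chzero (show j+1 < j+2 from by omega)]
  push_cast
  ring

lemma keyB1 (j : ℕ) : Tf (2*j+3) (j+1) = Gf (2*j+3) (j+2) - Gf (2*j+3) (j+1) := by
  rw [Tf, Gf, Gf,
      show 2*j+3+1-(j+1) = j+3 from by omega, show 2*j+3-(j+1) = j+2 from by omega,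
      show 2*j+3-1-(j+1) = j+1 from by omega, show 2*j+3-2-(j+1) = j from by omega,
      show 2*j+3-3-(j+1) = j-1 from by omega,
      show 2*j+3+1-(j+2) = j+2 from by omega, show 2*j+3-(j+2) = j+1 from by omega,
      show 2*j+3-1-(j+2) = j from by omega, show 2*j+3-2-(j+2) = j-1 from by omega]
  have A1 := v2 (j+1); rw [show j+1+2 = j+3 from by omega] at A1
  have A2 := v1 (j+1); rw [show j+1+1 = j+2 from by omega] at A2
  rw [A1, A2, chself, chself, chzero (show j < j+1 from by omega),
      chzero (show j-1 < j+1 from by omega), chzero (show j+1 < j+2 from by omega),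
      chzero (show j < j+2 from by omega), chzero (show j-1 < j+2 from by omega)]
  push_cast
  ring

lemma keyB0 (j : ℕ) : Tf (2*j+4) (j+2) = Gf (2*j+4) (j+3) - Gf (2*j+4) (j+2) := by
  rw [Tf, Gf, Gf,
      show 2*j+4+1-(j+2) = j+3 from by omega, show 2*j+4-(j+2) = j+2 from by omega,
      show 2*j+4-1-(j+2) = j+1 from by omega, show 2*j+4-2-(j+2) = j from by omega,
      show 2*j+4-3-(j+2) = j-1 from by omega,
      show 2*j+4+1-(j+3) = j+2 from by omega, show 2*j+4-(j+3) = j+1 from by omega,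
      show 2*j+4-1-(j+3) = j from by omega, show 2*j+4-2-(j+3) = j-1 from by omega]
  rw [show j+3 = (j+2)+1 from by omega, v1 (j+2)]
  rw [chself, chzero (show j+1 < j+2 from by omega), chzero (show j < j+2 from by omega),
      chzero (show j-1 < j+2 from by omega), chzero (show j+2 < j+3 from by omega),
      chzero (show j+1 < j+3 from by omega), chzero (show j < j+3 from by omega),
      chzero (show j-1 < j+3 from by omega)]
  push_cast
  ring

lemma keyBm1 (j : ℕ) : Tf (2*j+3) (j+2) = Gf (2*j+3) (j+3) - Gf (2*j+3) (j+2) := by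
  rw [Tf, Gf, Gf,
      show 2*j+3+1-(j+2) = j+2 from by omega, show 2*j+3-(j+2) = j+1 from by omega,
      show 2*j+3-1-(j+2) = j from by omega, show 2*j+3-2-(j+2) = j-1 from by omega,
      show 2*j+3-3-(j+2) = j-2 from by omega,
      show 2*j+3+1-(j+3) = j+1 from by omega, show 2*j+3-(j+3) = j from by omega,
      show 2*j+3-1-(j+3) = j-1 from by omega, show 2*j+3-2-(j+3) = j-2 from by omega]
  rw [chself, chzero (show j+1 < j+2 from by omega), chzero (show j < j+2 from by omega),
      chzero (show j-1 < j+2 from by omega), chzero (show j-2 < j+2 from by omega),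
      chzero (show j+1 < j+3 from by omega), chzero (show j < j+3 from by omega),
      chzero (show j-1 < j+3 from by omega), chzero (show j-2 < j+3 from by omega)]
  push_cast
  ring

lemma keyLow (n k : ℕ) (h : n + 2 ≤ 2*k) : Tf n k = Gf n (k+1) - Gf n k := by
  rw [Tf, Gf, Gf]
  rw [chzero (show n+1-k < k from by omega), chzero (show n-k < k from by omega),
      chzero (show n-1-k < k from by omega), chzero (show n-2-k < k from by omega),
      chzero (show n-3-k < k from by omega),
      chzero (show n+1-(k+1) < k+1 from by omega), chzero (show n-(k+1) < k+1 from by omega),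
      chzero (show n-1-(k+1) < k+1 from by omega), chzero (show n-2-(k+1) < k+1 from by omega)]
  ring

lemma chL2 (s k : ℕ) (h : k ≤ s) :
    ch s (k+1) * ((k:ℚ)+1) = ch s k * ((s:ℚ)-k) := by
  have h1 := Nat.choose_succ_right_eq s k
  have h2 : ((s - k : ℕ) : ℚ) = (s:ℚ)-k := by push_cast [Nat.cast_sub h]; ring
  have h3 := congrArg (fun x : ℕ => (x : ℚ)) h1
  push_cast at h3
  rw [ch, ch, ← h2]
  linarith [h3]

set_option maxHeartbeats 1000000 in
lemma keyMain (m k : ℕ) :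
    Tf (2*k+4+m) k = Gf (2*k+4+m) (k+1) - Gf (2*k+4+m) k := by
  have e2' : ch (k+2+m) k * ((m:ℚ)+2) = ch (k+1+m) k * ((k:ℚ)+2+(m:ℚ)) := by
    have h := chL1 (k+1+m) k (by omega)
    rw [show k+1+m+1 = k+2+m from by omega] at h
    push_cast at h
    linear_combination h
  have e3' : ch (k+3+m) k * (((m:ℚ)+3)*((m:ℚ)+2)) = ch (k+1+m) k * (((k:ℚ)+3+(m:ℚ))*((k:ℚ)+2+(m:ℚ))) := by
    have h := chL1 (k+2+m) k (by omega)
    rw [show k+2+m+1 = k+3+m from by omega] at h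
    push_cast at h
    linear_combination ((m:ℚ)+2)*h + ((k:ℚ)+3+(m:ℚ))*e2'
  have e4' : ch (k+4+m) k * (((m:ℚ)+4)*((m:ℚ)+3)*((m:ℚ)+2)) = ch (k+1+m) k * (((k:ℚ)+4+(m:ℚ))*((k:ℚ)+3+(m:ℚ))*((k:ℚ)+2+(m:ℚ))) := by
    have h := chL1 (k+3+m) k (by omega)
    rw [show k+3+m+1 = k+4+m from by omega] at h
    push_cast at h
    linear_combination ((m:ℚ)+3)*((m:ℚ)+2)*h + ((k:ℚ)+4+(m:ℚ))*e3'
  have e5' : ch (k+5+m) k * (((m:ℚ)+5)*((m:ℚ)+4)*((m:ℚ)+3)*((m:ℚ)+2)) = ch (k+1+m) k * (((k:ℚ)+5+(m:ℚ))*((k:ℚ)+4+(m:ℚ))*((k:ℚ)+3+(m:ℚ))*((k:ℚ)+2+(m:ℚ))) := by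
    have h := chL1 (k+4+m) k (by omega)
    rw [show k+4+m+1 = k+5+m from by omega] at h
    push_cast at h
    linear_combination ((m:ℚ)+4)*((m:ℚ)+3)*((m:ℚ)+2)*h + ((k:ℚ)+5+(m:ℚ))*e4'
  have f1' : ch (k+1+m) (k+1) * ((k:ℚ)+1) = ch (k+1+m) k * ((m:ℚ)+1) := by
    have h := chL2 (k+1+m) k (by omega)
    push_cast at h
    linear_combination h
  have f2' : ch (k+2+m) (k+1) * ((k:ℚ)+1) = ch (k+1+m) k * ((k:ℚ)+2+(m:ℚ)) := by
    have h := chL2 (k+2+m) k (by omega)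
    push_cast at h
    linear_combination h + e2'
  have f3' : ch (k+3+m) (k+1) * (((k:ℚ)+1)*((m:ℚ)+2)) = ch (k+1+m) k * (((k:ℚ)+3+(m:ℚ))*((k:ℚ)+2+(m:ℚ))) := by
    have h := chL2 (k+3+m) k (by omega)
    push_cast at h
    linear_combination ((m:ℚ)+2)*h + e3'
  have f4' : ch (k+4+m) (k+1) * (((k:ℚ)+1)*((m:ℚ)+3)*((m:ℚ)+2)) = ch (k+1+m) k * (((k:ℚ)+4+(m:ℚ))*((k:ℚ)+3+(m:ℚ))*((k:ℚ)+2+(m:ℚ))) := by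
    have h := chL2 (k+4+m) k (by omega)
    push_cast at h
    linear_combination ((m:ℚ)+3)*((m:ℚ)+2)*h + e4'
  rw [Tf, Gf, Gf]
  rw [show 2*k+4+m+1-k = k+5+m from by omega, show 2*k+4+m-k = k+4+m from by omega,
      show 2*k+4+m-1-k = k+3+m from by omega, show 2*k+4+m-2-k = k+2+m from by omega,
      show 2*k+4+m-3-k = k+1+m from by omega,
      show 2*k+4+m+1-(k+1) = k+4+m from by omega, show 2*k+4+m-(k+1) = k+3+m from by omega,
      show 2*k+4+m-1-(k+1) = k+2+m from by omega, show 2*k+4+m-2-(k+1) = k+1+m from by omega]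
  push_cast
  apply mul_left_cancel₀ (a := ((m:ℚ)+2)^2*((m:ℚ)+3)^2*((m:ℚ)+4)^2*((m:ℚ)+5)*((k:ℚ)+1))
    (by positivity)
  set a := ch (k+1+m) k with ha
  set c2 := ch (k+2+m) k with hc2
  set c3 := ch (k+3+m) k with hc3
  set c4 := ch (k+4+m) k with hc4
  set c5 := ch (k+5+m) k with hc5
  set d1 := ch (k+1+m) (k+1) with hd1
  set d2 := ch (k+2+m) (k+1) with hd2
  set d3 := ch (k+3+m) (k+1) with hd3
  set d4 := ch (k+4+m) (k+1) with hd4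
  linear_combination ((-10080)*c2 + (-21696)*c2*(m:ℚ) + (-19726)*c2*(m:ℚ)^2 + (-9833)*c2*(m:ℚ)^3 + (-2905)*c2*(m:ℚ)^4 + (-509)*c2*(m:ℚ)^5 + (-49)*c2*(m:ℚ)^6 + (-2)*c2*(m:ℚ)^7 + (-14400)*c2*(k:ℚ) + (-29760)*c2*(k:ℚ)*(m:ℚ) + (-25876)*c2*(k:ℚ)*(m:ℚ)^2 + (-12290)*c2*(k:ℚ)*(m:ℚ)^3 + (-3448)*c2*(k:ℚ)*(m:ℚ)^4 + (-572)*c2*(k:ℚ)*(m:ℚ)^5 + (-52)*c2*(k:ℚ)*(m:ℚ)^6 + (-2)*c2*(k:ℚ)*(m:ℚ)^7 + (-4320)*c2*(k:ℚ)^2 + (-8064)*c2*(k:ℚ)^2*(m:ℚ) + (-6150)*c2*(k:ℚ)^2*(m:ℚ)^2 + (-2457)*c2*(k:ℚ)^2*(m:ℚ)^3 + (-543)*c2*(k:ℚ)^2*(m:ℚ)^4 + (-63)*c2*(k:ℚ)^2*(m:ℚ)^5 + (-3)*c2*(k:ℚ)^2*(m:ℚ)^6 + (-10080)*a + (-21696)*a*(m:ℚ)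 + (-19726)*a*(m:ℚ)^2 + (-9833)*a*(m:ℚ)^3 + (-2905)*a*(m:ℚ)^4 + (-509)*a*(m:ℚ)^5 + (-49)*a*(m:ℚ)^6 + (-2)*a*(m:ℚ)^7 + (-23760)*a*(k:ℚ) + (-46152)*a*(k:ℚ)*(m:ℚ) + (-37725)*a*(k:ℚ)*(m:ℚ)^2 + (-16814)*a*(k:ℚ)*(m:ℚ)^3 + (-4410)*a*(k:ℚ)*(m:ℚ)^4 + (-680)*a*(k:ℚ)*(m:ℚ)^5 + (-57)*a*(k:ℚ)*(m:ℚ)^6 + (-2)*a*(k:ℚ)*(m:ℚ)^7 + (-14904)*a*(k:ℚ)^2 + (-23658)*a*(k:ℚ)^2*(m:ℚ) + (-15329)*a*(k:ℚ)^2*(m:ℚ)^2 + (-10353/2)*a*(k:ℚ)^2*(m:ℚ)^3 + (-1915/2)*a*(k:ℚ)^2*(m:ℚ)^4 + (-183/2)*a*(k:ℚ)^2*(m:ℚ)^5 + (-7/2)*a*(k:ℚ)^2*(m:ℚ)^6 + 2376*a*(k:ℚ)^3 + 6282*a*(k:ℚ)^3*(m:ℚ) + 5718*a*(k:ℚ)^3*(m:ℚ)^2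 + 2502*a*(k:ℚ)^3*(m:ℚ)^3 + 573*a*(k:ℚ)^3*(m:ℚ)^4 + 66*a*(k:ℚ)^3*(m:ℚ)^5 + 3*a*(k:ℚ)^3*(m:ℚ)^6 + 4158*a*(k:ℚ)^4 + (10755/2)*a*(k:ℚ)^4*(m:ℚ) + (4821/2)*a*(k:ℚ)^4*(m:ℚ)^2 + (675/2)*a*(k:ℚ)^4*(m:ℚ)^3 + (-105/2)*a*(k:ℚ)^4*(m:ℚ)^4 + (-39/2)*a*(k:ℚ)^4*(m:ℚ)^5 + (-3/2)*a*(k:ℚ)^4*(m:ℚ)^6 + (-972)*a*(k:ℚ)^5*(m:ℚ) + (-1107)*a*(k:ℚ)^5*(m:ℚ)^2 + (-468)*a*(k:ℚ)^5*(m:ℚ)^3 + (-87)*a*(k:ℚ)^5*(m:ℚ)^4 + (-6)*a*(k:ℚ)^5*(m:ℚ)^5 + (-756)*a*(k:ℚ)^6 + (-1053)*a*(k:ℚ)^6*(m:ℚ) + (-528)*a*(k:ℚ)^6*(m:ℚ)^2 + (-114)*a*(k:ℚ)^6*(m:ℚ)^3 + (-9)*a*(k:ℚ)^6*(m:ℚ)^4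 + (-216)*a*(k:ℚ)^7 + (-198)*a*(k:ℚ)^7*(m:ℚ) + (-60)*a*(k:ℚ)^7*(m:ℚ)^2 + (-6)*a*(k:ℚ)^7*(m:ℚ)^3 + (-18)*a*(k:ℚ)^8 + (-21/2)*a*(k:ℚ)^8*(m:ℚ) + (-3/2)*a*(k:ℚ)^8*(m:ℚ)^2) * e2'
    + ((-1920)*c3 + (-3424)*c3*(m:ℚ) + (-2488)*c3*(m:ℚ)^2 + (-946)*c3*(m:ℚ)^3 + (-199)*c3*(m:ℚ)^4 + (-22)*c3*(m:ℚ)^5 + (-1)*c3*(m:ℚ)^6 + (-3840)*c3*(k:ℚ) + (-6368)*c3*(k:ℚ)*(m:ℚ) + (-4240)*c3*(k:ℚ)*(m:ℚ)^2 + (-1454)*c3*(k:ℚ)*(m:ℚ)^3 + (-271)*c3*(k:ℚ)*(m:ℚ)^4 + (-26)*c3*(k:ℚ)*(m:ℚ)^5 + (-1)*c3*(k:ℚ)*(m:ℚ)^6 + (-3360)*c3*(k:ℚ)^2 + (-5152)*c3*(k:ℚ)^2*(m:ℚ) + (-3066)*c3*(k:ℚ)^2*(m:ℚ)^2 + (-889)*c3*(k:ℚ)^2*(m:ℚ)^3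 + (-126)*c3*(k:ℚ)^2*(m:ℚ)^4 + (-7)*c3*(k:ℚ)^2*(m:ℚ)^5 + (-1440)*c3*(k:ℚ)^3 + (-2208)*c3*(k:ℚ)^3*(m:ℚ) + (-1314)*c3*(k:ℚ)^3*(m:ℚ)^2 + (-381)*c3*(k:ℚ)^3*(m:ℚ)^3 + (-54)*c3*(k:ℚ)^3*(m:ℚ)^4 + (-3)*c3*(k:ℚ)^3*(m:ℚ)^5 + (-1920)*a + (-3424)*a*(m:ℚ) + (-2488)*a*(m:ℚ)^2 + (-946)*a*(m:ℚ)^3 + (-199)*a*(m:ℚ)^4 + (-22)*a*(m:ℚ)^5 + (-1)*a*(m:ℚ)^6 + (-3520)*a*(k:ℚ) + (-5584)*a*(k:ℚ)*(m:ℚ) + (-3636)*a*(k:ℚ)*(m:ℚ)^2 + (-1247)*a*(k:ℚ)*(m:ℚ)^3 + (-238)*a*(k:ℚ)*(m:ℚ)^4 + (-24)*a*(k:ℚ)*(m:ℚ)^5 + (-1)*a*(k:ℚ)*(m:ℚ)^6 + (-3696)*a*(k:ℚ)^2 + (-5384)*a*(k:ℚ)^2*(m:ℚ) + (-3133)*a*(k:ℚ)^2*(m:ℚ)^2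 + (-1817/2)*a*(k:ℚ)^2*(m:ℚ)^3 + (-131)*a*(k:ℚ)^2*(m:ℚ)^4 + (-15/2)*a*(k:ℚ)^2*(m:ℚ)^5 + (-4020)*a*(k:ℚ)^3 + (-5617)*a*(k:ℚ)^3*(m:ℚ) + (-3079)*a*(k:ℚ)^3*(m:ℚ)^2 + (-1651/2)*a*(k:ℚ)^3*(m:ℚ)^3 + (-108)*a*(k:ℚ)^3*(m:ℚ)^4 + (-11/2)*a*(k:ℚ)^3*(m:ℚ)^5 + (-2794)*a*(k:ℚ)^4 + (-6461/2)*a*(k:ℚ)^4*(m:ℚ) + (-1375)*a*(k:ℚ)^4*(m:ℚ)^2 + (-511/2)*a*(k:ℚ)^4*(m:ℚ)^3 + (-35/2)*a*(k:ℚ)^4*(m:ℚ)^4 + (-1150)*a*(k:ℚ)^5 + (-2111/2)*a*(k:ℚ)^5*(m:ℚ) + (-336)*a*(k:ℚ)^5*(m:ℚ)^2 + (-42)*a*(k:ℚ)^5*(m:ℚ)^3 + (-3/2)*a*(k:ℚ)^5*(m:ℚ)^4 + (-344)*a*(k:ℚ)^6 + (-252)*a*(k:ℚ)^6*(m:ℚ)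 + (-119/2)*a*(k:ℚ)^6*(m:ℚ)^2 + (-9/2)*a*(k:ℚ)^6*(m:ℚ)^3 + (-70)*a*(k:ℚ)^7 + (-71/2)*a*(k:ℚ)^7*(m:ℚ) + (-9/2)*a*(k:ℚ)^7*(m:ℚ)^2 + (-6)*a*(k:ℚ)^8 + (-3/2)*a*(k:ℚ)^8*(m:ℚ)) * e3'
    + ((-1080)*c4 + (-1626)*c4*(m:ℚ) + (-947)*c4*(m:ℚ)^2 + (-268)*c4*(m:ℚ)^3 + (-37)*c4*(m:ℚ)^4 + (-2)*c4*(m:ℚ)^5 + (-1080)*c4*(k:ℚ) + (-1626)*c4*(k:ℚ)*(m:ℚ) + (-947)*c4*(k:ℚ)*(m:ℚ)^2 + (-268)*c4*(k:ℚ)*(m:ℚ)^3 + (-37)*c4*(k:ℚ)*(m:ℚ)^4 + (-2)*c4*(k:ℚ)*(m:ℚ)^5 + 300*c4*(k:ℚ)^2 + 385*c4*(k:ℚ)^2*(m:ℚ) + (355/2)*c4*(k:ℚ)^2*(m:ℚ)^2 + 35*c4*(k:ℚ)^2*(m:ℚ)^3 + (5/2)*c4*(k:ℚ)^2*(m:ℚ)^4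 + 480*c4*(k:ℚ)^3 + 616*c4*(k:ℚ)^3*(m:ℚ) + 284*c4*(k:ℚ)^3*(m:ℚ)^2 + 56*c4*(k:ℚ)^3*(m:ℚ)^3 + 4*c4*(k:ℚ)^3*(m:ℚ)^4 + 180*c4*(k:ℚ)^4 + 231*c4*(k:ℚ)^4*(m:ℚ) + (213/2)*c4*(k:ℚ)^4*(m:ℚ)^2 + 21*c4*(k:ℚ)^4*(m:ℚ)^3 + (3/2)*c4*(k:ℚ)^4*(m:ℚ)^4 + 180*c3*(k:ℚ)^3 + 231*c3*(k:ℚ)^3*(m:ℚ) + (213/2)*c3*(k:ℚ)^3*(m:ℚ)^2 + 21*c3*(k:ℚ)^3*(m:ℚ)^3 + (3/2)*c3*(k:ℚ)^3*(m:ℚ)^4 + 180*c3*(k:ℚ)^4 + 231*c3*(k:ℚ)^4*(m:ℚ) + (213/2)*c3*(k:ℚ)^4*(m:ℚ)^2 + 21*c3*(k:ℚ)^4*(m:ℚ)^3 + (3/2)*c3*(k:ℚ)^4*(m:ℚ)^4 + (-1080)*a + (-1626)*a*(m:ℚ) + (-947)*a*(m:ℚ)^2 + (-268)*a*(m:ℚ)^3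 + (-37)*a*(m:ℚ)^4 + (-2)*a*(m:ℚ)^5 + (-2490)*a*(k:ℚ) + (-3238)*a*(k:ℚ)*(m:ℚ) + (-1618)*a*(k:ℚ)*(m:ℚ)^2 + (-389)*a*(k:ℚ)*(m:ℚ)^3 + (-45)*a*(k:ℚ)*(m:ℚ)^4 + (-2)*a*(k:ℚ)*(m:ℚ)^5 + (-2003)*a*(k:ℚ)^2 + (-2048)*a*(k:ℚ)^2*(m:ℚ) + (-759)*a*(k:ℚ)^2*(m:ℚ)^2 + (-121)*a*(k:ℚ)^2*(m:ℚ)^3 + (-7)*a*(k:ℚ)^2*(m:ℚ)^4 + (-506)*a*(k:ℚ)^3 + (-231)*a*(k:ℚ)^3*(m:ℚ) + 24*a*(k:ℚ)^3*(m:ℚ)^2 + (45/2)*a*(k:ℚ)^3*(m:ℚ)^3 + (5/2)*a*(k:ℚ)^3*(m:ℚ)^4 + 260*a*(k:ℚ)^4 + 368*a*(k:ℚ)^4*(m:ℚ) + 160*a*(k:ℚ)^4*(m:ℚ)^2 + 27*a*(k:ℚ)^4*(m:ℚ)^3 + (3/2)*a*(k:ℚ)^4*(m:ℚ)^4 + 230*a*(k:ℚ)^5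 + (391/2)*a*(k:ℚ)^5*(m:ℚ) + (105/2)*a*(k:ℚ)^5*(m:ℚ)^2 + (9/2)*a*(k:ℚ)^5*(m:ℚ)^3 + 63*a*(k:ℚ)^6 + 34*a*(k:ℚ)^6*(m:ℚ) + (9/2)*a*(k:ℚ)^6*(m:ℚ)^2 + 6*a*(k:ℚ)^7 + (3/2)*a*(k:ℚ)^7*(m:ℚ)) * e4'
    + (120*c5 + 154*c5*(m:ℚ) + 71*c5*(m:ℚ)^2 + 14*c5*(m:ℚ)^3 + c5*(m:ℚ)^4 + 120*c5*(k:ℚ) + 154*c5*(k:ℚ)*(m:ℚ) + 71*c5*(k:ℚ)*(m:ℚ)^2 + 14*c5*(k:ℚ)*(m:ℚ)^3 + c5*(k:ℚ)*(m:ℚ)^4 + (-48)*c4*(k:ℚ) + (-52)*c4*(k:ℚ)*(m:ℚ) + (-18)*c4*(k:ℚ)*(m:ℚ)^2 + (-2)*c4*(k:ℚ)*(m:ℚ)^3 + (-84)*c4*(k:ℚ)^2 + (-91)*c4*(k:ℚ)^2*(m:ℚ) + (-63/2)*c4*(k:ℚ)^2*(m:ℚ)^2 + (-7/2)*c4*(k:ℚ)^2*(m:ℚ)^3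 + (-36)*c4*(k:ℚ)^3 + (-39)*c4*(k:ℚ)^3*(m:ℚ) + (-27/2)*c4*(k:ℚ)^3*(m:ℚ)^2 + (-3/2)*c4*(k:ℚ)^3*(m:ℚ)^3 + 96*c3*(k:ℚ) + 104*c3*(k:ℚ)*(m:ℚ) + 36*c3*(k:ℚ)*(m:ℚ)^2 + 4*c3*(k:ℚ)*(m:ℚ)^3 + 36*c3*(k:ℚ)^2 + 39*c3*(k:ℚ)^2*(m:ℚ) + (27/2)*c3*(k:ℚ)^2*(m:ℚ)^2 + (3/2)*c3*(k:ℚ)^2*(m:ℚ)^3 + (-96)*c3*(k:ℚ)^3 + (-104)*c3*(k:ℚ)^3*(m:ℚ) + (-36)*c3*(k:ℚ)^3*(m:ℚ)^2 + (-4)*c3*(k:ℚ)^3*(m:ℚ)^3 + (-36)*c3*(k:ℚ)^4 + (-39)*c3*(k:ℚ)^4*(m:ℚ) + (-27/2)*c3*(k:ℚ)^4*(m:ℚ)^2 + (-3/2)*c3*(k:ℚ)^4*(m:ℚ)^3 + (-72)*c2*(k:ℚ) + (-78)*c2*(k:ℚ)*(m:ℚ) + (-27)*c2*(k:ℚ)*(m:ℚ)^2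 + (-3)*c2*(k:ℚ)*(m:ℚ)^3 + 36*c2*(k:ℚ)^2 + 39*c2*(k:ℚ)^2*(m:ℚ) + (27/2)*c2*(k:ℚ)^2*(m:ℚ)^2 + (3/2)*c2*(k:ℚ)^2*(m:ℚ)^3 + 72*c2*(k:ℚ)^3 + 78*c2*(k:ℚ)^3*(m:ℚ) + 27*c2*(k:ℚ)^3*(m:ℚ)^2 + 3*c2*(k:ℚ)^3*(m:ℚ)^3 + (-36)*c2*(k:ℚ)^4 + (-39)*c2*(k:ℚ)^4*(m:ℚ) + (-27/2)*c2*(k:ℚ)^4*(m:ℚ)^2 + (-3/2)*c2*(k:ℚ)^4*(m:ℚ)^3 + 120*a + 154*a*(m:ℚ) + 71*a*(m:ℚ)^2 + 14*a*(m:ℚ)^3 + a*(m:ℚ)^4 + 274*a*(k:ℚ) + 296*a*(k:ℚ)*(m:ℚ) + 113*a*(k:ℚ)*(m:ℚ)^2 + 18*a*(k:ℚ)*(m:ℚ)^3 + a*(k:ℚ)*(m:ℚ)^4 + 225*a*(k:ℚ)^2 + 184*a*(k:ℚ)^2*(m:ℚ) + 48*a*(k:ℚ)^2*(m:ℚ)^2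 + 4*a*(k:ℚ)^2*(m:ℚ)^3 + 85*a*(k:ℚ)^3 + 46*a*(k:ℚ)^3*(m:ℚ) + 6*a*(k:ℚ)^3*(m:ℚ)^2 + 15*a*(k:ℚ)^4 + 4*a*(k:ℚ)^4*(m:ℚ) + a*(k:ℚ)^5) * e5'
    + ((-2880)*d1 + (-6816)*d1*(m:ℚ) + (-6788)*d1*(m:ℚ)^2 + (-3688)*d1*(m:ℚ)^3 + (-1181)*d1*(m:ℚ)^4 + (-223)*d1*(m:ℚ)^5 + (-23)*d1*(m:ℚ)^6 + (-1)*d1*(m:ℚ)^7 + (-2880)*d1*(k:ℚ) + (-6816)*d1*(k:ℚ)*(m:ℚ) + (-6788)*d1*(k:ℚ)*(m:ℚ)^2 + (-3688)*d1*(k:ℚ)*(m:ℚ)^3 + (-1181)*d1*(k:ℚ)*(m:ℚ)^4 + (-223)*d1*(k:ℚ)*(m:ℚ)^5 + (-23)*d1*(k:ℚ)*(m:ℚ)^6 + (-1)*d1*(k:ℚ)*(m:ℚ)^7 + (-2880)*a + (-9696)*a*(m:ℚ) + (-13604)*a*(m:ℚ)^2 + (-10476)*a*(m:ℚ)^3 +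 (-4869)*a*(m:ℚ)^4 + (-1404)*a*(m:ℚ)^5 + (-246)*a*(m:ℚ)^6 + (-24)*a*(m:ℚ)^7 + (-1)*a*(m:ℚ)^8 + (-17280)*a*(k:ℚ) + (-45216)*a*(k:ℚ)*(m:ℚ) + (-50952)*a*(k:ℚ)*(m:ℚ)^2 + (-32310)*a*(k:ℚ)*(m:ℚ)^3 + (-12618)*a*(k:ℚ)*(m:ℚ)^4 + (-6219/2)*a*(k:ℚ)*(m:ℚ)^5 + (-945/2)*a*(k:ℚ)*(m:ℚ)^6 + (-81/2)*a*(k:ℚ)*(m:ℚ)^7 + (-3/2)*a*(k:ℚ)*(m:ℚ)^8 + (-1440)*a*(k:ℚ)^2 + 3552*a*(k:ℚ)^2*(m:ℚ) + 11838*a*(k:ℚ)^2*(m:ℚ)^2 + 12219*a*(k:ℚ)^2*(m:ℚ)^3 + 6516*a*(k:ℚ)^2*(m:ℚ)^4 + 2013*a*(k:ℚ)^2*(m:ℚ)^5 + (729/2)*a*(k:ℚ)^2*(m:ℚ)^6 + 36*a*(k:ℚ)^2*(m:ℚ)^7 + (3/2)*a*(k:ℚ)^2*(m:ℚ)^8 +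 12240*a*(k:ℚ)^3 + 29568*a*(k:ℚ)^3*(m:ℚ) + 29889*a*(k:ℚ)^3*(m:ℚ)^2 + (32811/2)*a*(k:ℚ)^3*(m:ℚ)^3 + (10575/2)*a*(k:ℚ)^3*(m:ℚ)^4 + 1002*a*(k:ℚ)^3*(m:ℚ)^5 + (207/2)*a*(k:ℚ)^3*(m:ℚ)^6 + (9/2)*a*(k:ℚ)^3*(m:ℚ)^7 + 5760*a*(k:ℚ)^4 + 10992*a*(k:ℚ)^4*(m:ℚ) + 8568*a*(k:ℚ)^4*(m:ℚ)^2 + 3495*a*(k:ℚ)^4*(m:ℚ)^3 + (1575/2)*a*(k:ℚ)^4*(m:ℚ)^4 + 93*a*(k:ℚ)^4*(m:ℚ)^5 + (9/2)*a*(k:ℚ)^4*(m:ℚ)^6 + 720*a*(k:ℚ)^5 + 1104*a*(k:ℚ)^5*(m:ℚ) + 657*a*(k:ℚ)^5*(m:ℚ)^2 + (381/2)*a*(k:ℚ)^5*(m:ℚ)^3 + 27*a*(k:ℚ)^5*(m:ℚ)^4 + (3/2)*a*(k:ℚ)^5*(m:ℚ)^5) * f1'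
    + (14400*d2 + 34080*d2*(m:ℚ) + 33940*d2*(m:ℚ)^2 + 18440*d2*(m:ℚ)^3 + 5905*d2*(m:ℚ)^4 + 1115*d2*(m:ℚ)^5 + 115*d2*(m:ℚ)^6 + 5*d2*(m:ℚ)^7 + 23040*d2*(k:ℚ) + 54528*d2*(k:ℚ)*(m:ℚ) + 54304*d2*(k:ℚ)*(m:ℚ)^2 + 29504*d2*(k:ℚ)*(m:ℚ)^3 + 9448*d2*(k:ℚ)*(m:ℚ)^4 + 1784*d2*(k:ℚ)*(m:ℚ)^5 + 184*d2*(k:ℚ)*(m:ℚ)^6 + 8*d2*(k:ℚ)*(m:ℚ)^7 + 8640*d2*(k:ℚ)^2 + 20448*d2*(k:ℚ)^2*(m:ℚ) + 20364*d2*(k:ℚ)^2*(m:ℚ)^2 + 11064*d2*(k:ℚ)^2*(m:ℚ)^3 + 3543*d2*(k:ℚ)^2*(m:ℚ)^4 + 669*d2*(k:ℚ)^2*(m:ℚ)^5 + 69*d2*(k:ℚ)^2*(m:ℚ)^6 + 3*d2*(k:ℚ)^2*(m:ℚ)^7 + 15840*a + 47568*a*(m:ℚ) + 61190*a*(m:ℚ)^2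 + 44042*a*(m:ℚ)^3 + (38807/2)*a*(m:ℚ)^4 + 5360*a*(m:ℚ)^5 + 907*a*(m:ℚ)^6 + 86*a*(m:ℚ)^7 + (7/2)*a*(m:ℚ)^8 + 58320*a*(k:ℚ) + 154944*a*(k:ℚ)*(m:ℚ) + 176961*a*(k:ℚ)*(m:ℚ)^2 + (227107/2)*a*(k:ℚ)*(m:ℚ)^3 + (89627/2)*a*(k:ℚ)*(m:ℚ)^4 + 11147*a*(k:ℚ)*(m:ℚ)^5 + 1708*a*(k:ℚ)*(m:ℚ)^6 + (295/2)*a*(k:ℚ)*(m:ℚ)^7 + (11/2)*a*(k:ℚ)*(m:ℚ)^8 + 57840*a*(k:ℚ)^2 + 130448*a*(k:ℚ)^2*(m:ℚ) + 124011*a*(k:ℚ)^2*(m:ℚ)^2 + (128899/2)*a*(k:ℚ)^2*(m:ℚ)^3 + 19788*a*(k:ℚ)^2*(m:ℚ)^4 + (7183/2)*a*(k:ℚ)^2*(m:ℚ)^5 + 357*a*(k:ℚ)^2*(m:ℚ)^6 + 15*a*(k:ℚ)^2*(m:ℚ)^7 + 27360*a*(k:ℚ)^3 + 53472*a*(k:ℚ)^3*(m:ℚ)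 + 43350*a*(k:ℚ)^3*(m:ℚ)^2 + 18855*a*(k:ℚ)^3*(m:ℚ)^3 + 4731*a*(k:ℚ)^3*(m:ℚ)^4 + (1359/2)*a*(k:ℚ)^3*(m:ℚ)^5 + 51*a*(k:ℚ)^3*(m:ℚ)^6 + (3/2)*a*(k:ℚ)^3*(m:ℚ)^7 + 6960*a*(k:ℚ)^4 + 12112*a*(k:ℚ)^4*(m:ℚ) + 8559*a*(k:ℚ)^4*(m:ℚ)^2 + (6311/2)*a*(k:ℚ)^4*(m:ℚ)^3 + 642*a*(k:ℚ)^4*(m:ℚ)^4 + (137/2)*a*(k:ℚ)^4*(m:ℚ)^5 + 3*a*(k:ℚ)^4*(m:ℚ)^6 + 720*a*(k:ℚ)^5 + 1104*a*(k:ℚ)^5*(m:ℚ) + 657*a*(k:ℚ)^5*(m:ℚ)^2 + (381/2)*a*(k:ℚ)^5*(m:ℚ)^3 + 27*a*(k:ℚ)^5*(m:ℚ)^4 + (3/2)*a*(k:ℚ)^5*(m:ℚ)^5) * f2'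
    + ((-11520)*d3 + (-21504)*d3*(m:ℚ) + (-16400)*d3*(m:ℚ)^2 + (-6552)*d3*(m:ℚ)^3 + (-1448)*d3*(m:ℚ)^4 + (-168)*d3*(m:ℚ)^5 + (-8)*d3*(m:ℚ)^6 + (-19440)*d3*(k:ℚ) + (-36288)*d3*(k:ℚ)*(m:ℚ) + (-27675)*d3*(k:ℚ)*(m:ℚ)^2 + (-22113/2)*d3*(k:ℚ)*(m:ℚ)^3 + (-4887/2)*d3*(k:ℚ)*(m:ℚ)^4 + (-567/2)*d3*(k:ℚ)*(m:ℚ)^5 + (-27/2)*d3*(k:ℚ)*(m:ℚ)^6 + (-10080)*d3*(k:ℚ)^2 + (-18816)*d3*(k:ℚ)^2*(m:ℚ) + (-14350)*d3*(k:ℚ)^2*(m:ℚ)^2 + (-5733)*d3*(k:ℚ)^2*(m:ℚ)^3 + (-1267)*d3*(k:ℚ)^2*(m:ℚ)^4 + (-147)*d3*(k:ℚ)^2*(m:ℚ)^5 + (-7)*d3*(k:ℚ)^2*(m:ℚ)^6 + (-2160)*d3*(k:ℚ)^3 + (-4032)*d3*(k:ℚ)^3*(m:ℚ) + (-3075)*d3*(k:ℚ)^3*(m:ℚ)^2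 + (-2457/2)*d3*(k:ℚ)^3*(m:ℚ)^3 + (-543/2)*d3*(k:ℚ)^3*(m:ℚ)^4 + (-63/2)*d3*(k:ℚ)^3*(m:ℚ)^5 + (-3/2)*d3*(k:ℚ)^3*(m:ℚ)^6 + (-2160)*d2 + (-4032)*d2*(m:ℚ) + (-3075)*d2*(m:ℚ)^2 + (-2457/2)*d2*(m:ℚ)^3 + (-543/2)*d2*(m:ℚ)^4 + (-63/2)*d2*(m:ℚ)^5 + (-3/2)*d2*(m:ℚ)^6 + (-6480)*d2*(k:ℚ) + (-12096)*d2*(k:ℚ)*(m:ℚ) + (-9225)*d2*(k:ℚ)*(m:ℚ)^2 + (-7371/2)*d2*(k:ℚ)*(m:ℚ)^3 + (-1629/2)*d2*(k:ℚ)*(m:ℚ)^4 + (-189/2)*d2*(k:ℚ)*(m:ℚ)^5 + (-9/2)*d2*(k:ℚ)*(m:ℚ)^6 + (-6480)*d2*(k:ℚ)^2 + (-12096)*d2*(k:ℚ)^2*(m:ℚ) + (-9225)*d2*(k:ℚ)^2*(m:ℚ)^2 + (-7371/2)*d2*(k:ℚ)^2*(m:ℚ)^3 + (-1629/2)*d2*(k:ℚ)^2*(m:ℚ)^4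 + (-189/2)*d2*(k:ℚ)^2*(m:ℚ)^5 + (-9/2)*d2*(k:ℚ)^2*(m:ℚ)^6 + (-2160)*d2*(k:ℚ)^3 + (-4032)*d2*(k:ℚ)^3*(m:ℚ) + (-3075)*d2*(k:ℚ)^3*(m:ℚ)^2 + (-2457/2)*d2*(k:ℚ)^3*(m:ℚ)^3 + (-543/2)*d2*(k:ℚ)^3*(m:ℚ)^4 + (-63/2)*d2*(k:ℚ)^3*(m:ℚ)^5 + (-3/2)*d2*(k:ℚ)^3*(m:ℚ)^6 + (-14400)*a + (-33360)*a*(m:ℚ) + (-32596)*a*(m:ℚ)^2 + (-17415)*a*(m:ℚ)^3 + (-10991/2)*a*(m:ℚ)^4 + (-2049/2)*a*(m:ℚ)^5 + (-209/2)*a*(m:ℚ)^6 + (-9/2)*a*(m:ℚ)^7 + (-22080)*a*(k:ℚ) + (-47176)*a*(k:ℚ)*(m:ℚ) + (-42552)*a*(k:ℚ)*(m:ℚ)^2 + (-42005/2)*a*(k:ℚ)*(m:ℚ)^3 + (-6128)*a*(k:ℚ)*(m:ℚ)^4 + (-2115/2)*a*(k:ℚ)*(m:ℚ)^5 + (-100)*a*(k:ℚ)*(m:ℚ)^6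 + (-4)*a*(k:ℚ)*(m:ℚ)^7 + (-15120)*a*(k:ℚ)^2 + (-30624)*a*(k:ℚ)^2*(m:ℚ) + (-25925)*a*(k:ℚ)^2*(m:ℚ)^2 + (-23787/2)*a*(k:ℚ)^2*(m:ℚ)^3 + (-6385/2)*a*(k:ℚ)^2*(m:ℚ)^4 + (-501)*a*(k:ℚ)^2*(m:ℚ)^5 + (-85/2)*a*(k:ℚ)^2*(m:ℚ)^6 + (-3/2)*a*(k:ℚ)^2*(m:ℚ)^7 + (-5280)*a*(k:ℚ)^3 + (-9656)*a*(k:ℚ)^3*(m:ℚ) + (-7150)*a*(k:ℚ)^3*(m:ℚ)^2 + (-5517/2)*a*(k:ℚ)^3*(m:ℚ)^3 + (-587)*a*(k:ℚ)^3*(m:ℚ)^4 + (-131/2)*a*(k:ℚ)^3*(m:ℚ)^5 + (-3)*a*(k:ℚ)^3*(m:ℚ)^6 + (-720)*a*(k:ℚ)^4 + (-1104)*a*(k:ℚ)^4*(m:ℚ) + (-657)*a*(k:ℚ)^4*(m:ℚ)^2 + (-381/2)*a*(k:ℚ)^4*(m:ℚ)^3 + (-27)*a*(k:ℚ)^4*(m:ℚ)^4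 + (-3/2)*a*(k:ℚ)^4*(m:ℚ)^5) * f3'
    + (960*d4 + 1472*d4*(m:ℚ) + 876*d4*(m:ℚ)^2 + 254*d4*(m:ℚ)^3 + 36*d4*(m:ℚ)^4 + 2*d4*(m:ℚ)^5 + 960*d4*(k:ℚ) + 1472*d4*(k:ℚ)*(m:ℚ) + 876*d4*(k:ℚ)*(m:ℚ)^2 + 254*d4*(k:ℚ)*(m:ℚ)^3 + 36*d4*(k:ℚ)*(m:ℚ)^4 + 2*d4*(k:ℚ)*(m:ℚ)^5 + 1680*d3 + 2576*d3*(m:ℚ) + 1533*d3*(m:ℚ)^2 + (889/2)*d3*(m:ℚ)^3 + 63*d3*(m:ℚ)^4 + (7/2)*d3*(m:ℚ)^5 + 2400*d3*(k:ℚ) + 3680*d3*(k:ℚ)*(m:ℚ) + 2190*d3*(k:ℚ)*(m:ℚ)^2 + 635*d3*(k:ℚ)*(m:ℚ)^3 + 90*d3*(k:ℚ)*(m:ℚ)^4 + 5*d3*(k:ℚ)*(m:ℚ)^5 + 720*d3*(k:ℚ)^2 + 1104*d3*(k:ℚ)^2*(m:ℚ) + 657*d3*(k:ℚ)^2*(m:ℚ)^2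 + (381/2)*d3*(k:ℚ)^2*(m:ℚ)^3 + 27*d3*(k:ℚ)^2*(m:ℚ)^4 + (3/2)*d3*(k:ℚ)^2*(m:ℚ)^5 + 2640*d2*(k:ℚ) + 4048*d2*(k:ℚ)*(m:ℚ) + 2409*d2*(k:ℚ)*(m:ℚ)^2 + (1397/2)*d2*(k:ℚ)*(m:ℚ)^3 + 99*d2*(k:ℚ)*(m:ℚ)^4 + (11/2)*d2*(k:ℚ)*(m:ℚ)^5 + 3360*d2*(k:ℚ)^2 + 5152*d2*(k:ℚ)^2*(m:ℚ) + 3066*d2*(k:ℚ)^2*(m:ℚ)^2 + 889*d2*(k:ℚ)^2*(m:ℚ)^3 + 126*d2*(k:ℚ)^2*(m:ℚ)^4 + 7*d2*(k:ℚ)^2*(m:ℚ)^5 + 720*d2*(k:ℚ)^3 + 1104*d2*(k:ℚ)^3*(m:ℚ) + 657*d2*(k:ℚ)^3*(m:ℚ)^2 + (381/2)*d2*(k:ℚ)^3*(m:ℚ)^3 + 27*d2*(k:ℚ)^3*(m:ℚ)^4 + (3/2)*d2*(k:ℚ)^3*(m:ℚ)^5 + (-720)*d1*(k:ℚ) + (-1104)*d1*(k:ℚ)*(m:ℚ)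 + (-657)*d1*(k:ℚ)*(m:ℚ)^2 + (-381/2)*d1*(k:ℚ)*(m:ℚ)^3 + (-27)*d1*(k:ℚ)*(m:ℚ)^4 + (-3/2)*d1*(k:ℚ)*(m:ℚ)^5 + 720*d1*(k:ℚ)^3 + 1104*d1*(k:ℚ)^3*(m:ℚ) + 657*d1*(k:ℚ)^3*(m:ℚ)^2 + (381/2)*d1*(k:ℚ)^3*(m:ℚ)^3 + 27*d1*(k:ℚ)^3*(m:ℚ)^4 + (3/2)*d1*(k:ℚ)^3*(m:ℚ)^5 + 3840*a + 6848*a*(m:ℚ) + 4976*a*(m:ℚ)^2 + 1892*a*(m:ℚ)^3 + 398*a*(m:ℚ)^4 + 44*a*(m:ℚ)^5 + 2*a*(m:ℚ)^6 + 4160*a*(k:ℚ) + 5792*a*(k:ℚ)*(m:ℚ) + 3172*a*(k:ℚ)*(m:ℚ)^2 + 856*a*(k:ℚ)*(m:ℚ)^3 + 114*a*(k:ℚ)*(m:ℚ)^4 + 6*a*(k:ℚ)*(m:ℚ)^5 + 1440*a*(k:ℚ)^2 + 1488*a*(k:ℚ)^2*(m:ℚ) + 570*a*(k:ℚ)^2*(m:ℚ)^2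 + 96*a*(k:ℚ)^2*(m:ℚ)^3 + 6*a*(k:ℚ)^2*(m:ℚ)^4 + 160*a*(k:ℚ)^3 + 112*a*(k:ℚ)^3*(m:ℚ) + 26*a*(k:ℚ)^3*(m:ℚ)^2 + 2*a*(k:ℚ)^3*(m:ℚ)^3) * f4'

lemma key (n k : ℕ) (hn : 3 ≤ n) : Tf n k = Gf n (k+1) - Gf n k := by
  rcases le_or_gt (2*k+4) n with h|h
  · obtain ⟨m, rfl⟩ : ∃ m, n = 2*k+4+m := ⟨n - (2*k+4), by omega⟩
    exact keyMain m k
  · have hc : n = 2*k+3 ∨ n = 2*k+2 ∨ n = 2*k+1 ∨ n = 2*k ∨ n = 2*k-1 ∨ n+2 ≤ 2*k := by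
      omega
    rcases hc with h1|h1|h1|h1|h1|h1
    · subst h1; exact keyB3 k
    · obtain ⟨j, rfl⟩ : ∃ j, k = j+1 := ⟨k-1, by omega⟩
      subst h1
      rw [show 2*(j+1)+2 = 2*j+4 from by omega]
      exact keyB2 j
    · obtain ⟨j, rfl⟩ : ∃ j, k = j+1 := ⟨k-1, by omega⟩
      subst h1
      rw [show 2*(j+1)+1 = 2*j+3 from by omega]
      exact keyB1 j
    · obtain ⟨j, rfl⟩ : ∃ j, k = j+2 := ⟨k-2, by omega⟩
      subst h1
      rw [show 2*(j+2) = 2*j+4 from by omega]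
      exact keyB0 j
    · obtain ⟨j, rfl⟩ : ∃ j, k = j+2 := ⟨k-2, by omega⟩
      subst h1
      rw [show 2*(j+2)-1 = 2*j+3 from by omega]
      exact keyBm1 j
    · exact keyLow n k h1

noncomputable def dd : ℕ → ℚ := fun n => ∑ k ∈ Finset.range (n+1), ch (n-k) k ^ 2

lemma ddrec (m : ℕ) :
    ((m:ℚ)+5) * dd (m+5) = (2*(m:ℚ)+9) * dd (m+4) + ((m:ℚ)+4) * dd (m+3)
      + (2*(m:ℚ)+7) * dd (m+2) - ((m:ℚ)+3) * dd (m+1) := by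
  have ext : ∀ j, j+1 ≤ m+6 → dd j = ∑ k ∈ range (m+6), ch (j-k) k ^2 := by
    intro j hj
    rw [dd]
    apply Finset.sum_subset (Finset.range_subset_range.2 (by omega))
    intro x hx hnx
    simp only [Finset.mem_range] at hx hnx
    rw [show j - x = 0 from by omega, chzero (show 0 < x from by omega)]
    norm_num
  have tele : ∑ k ∈ range (m+6), (Gf (m+4) (k+1) - Gf (m+4) k)
      = Gf (m+4) (m+6) - Gf (m+4) 0 := Finset.sum_range_sub (fun k => Gf (m+4) k) (m+6)
  have hG0 : Gf (m+4) 0 = 0 := by rw [Gf]; push_cast; ring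
  have hGend : Gf (m+4) (m+6) = 0 := by
    rw [Gf, show m+4+1-(m+6) = 0 from by omega, show m+4-(m+6) = 0 from by omega,
        show m+4-1-(m+6) = 0 from by omega, show m+4-2-(m+6) = 0 from by omega]
    simp only [chzero (show 0 < m+6 from by omega)]
    ring
  have hsum : ∑ k ∈ range (m+6), Tf (m+4) k = 0 := by
    rw [Finset.sum_congr rfl (fun k _ => key (m+4) k (by omega)), tele, hG0, hGend]
    ring
  simp only [Tf, show m+4+1 = m+5 from by omega, show m+4-1 = m+3 from by omega,
      show m+4-2 = m+2 from by omega, show m+4-3 = m+1 from by omega] at hsum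
  simp only [Finset.sum_add_distrib, Finset.sum_sub_distrib, ← Finset.mul_sum] at hsum
  rw [← ext (m+5) (by omega), ← ext (m+4) (by omega), ← ext (m+3) (by omega),
      ← ext (m+2) (by omega), ← ext (m+1) (by omega)] at hsum
  push_cast at hsum
  linear_combination hsum

lemma dd0 : dd 0 = 1 := by norm_num [dd, ch, Finset.sum_range_succ]
lemma dd1 : dd 1 = 1 := by norm_num [dd, ch, Finset.sum_range_succ]
lemma dd2 : dd 2 = 2 := by norm_num [dd, ch, Finset.sum_range_succ]
lemma dd3 : dd 3 = 5 := by norm_num [dd, ch, Finset.sum_range_succ, Nat.choose]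
lemma dd4 : dd 4 = 11 := by norm_num [dd, ch, Finset.sum_range_succ, Nat.choose]

open PowerSeries in
theorem stmt_4 :
    (PowerSeries.mk fun n => ∑ k ∈ Finset.range (n + 1), ((n - k).choose k : ℚ) ^ 2) ^ 2 *
      ((X : PowerSeries ℚ) ^ 4 - 2 * X ^ 3 - X ^ 2 - 2 * X + 1) = 1 := by
  show (PowerSeries.mk dd) ^ 2 * ((X : PowerSeries ℚ) ^ 4 - 2 * X ^ 3 - X ^ 2 - 2 * X + 1) = 1
  have hdQ : d⁄dX ℚ ((X : PowerSeries ℚ) ^ 4 - 2 * X ^ 3 - X ^ 2 - 2 * X + 1)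
      = 4 * (X : PowerSeries ℚ)^3 - 6 * X^2 - 2 * X - 2 := by
    have e : ((X:PowerSeries ℚ)^4 - 2*X^3 - X^2 - 2*X + 1)
        = X^4 - (X^3 + X^3) - X^2 - (X + X) + 1 := by ring
    rw [e, map_add, map_sub, map_sub, map_sub, map_add, map_add, Derivation.map_one_eq_zero,
        Derivation.leibniz_pow, Derivation.leibniz_pow, Derivation.leibniz_pow, derivative_X]
    simp only [nsmul_eq_mul, smul_eq_mul]
    push_cast
    ring
  have hZ : (PowerSeries.mk dd) * X^3 * 4 - (PowerSeries.mk dd) * X^2 * 6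
      - (PowerSeries.mk dd) * X^1 * 2 - (PowerSeries.mk dd) * 2
      + (d⁄dX ℚ (PowerSeries.mk dd)) * X^4 * 2 - (d⁄dX ℚ (PowerSeries.mk dd)) * X^3 * 4
      - (d⁄dX ℚ (PowerSeries.mk dd)) * X^2 * 2 - (d⁄dX ℚ (PowerSeries.mk dd)) * X^1 * 4
      + (d⁄dX ℚ (PowerSeries.mk dd)) * 2 = 0 := by
    rw [show (4:PowerSeries ℚ) = C (4:ℚ) from (map_ofNat (C (R := ℚ)) 4).symm,
        show (6:PowerSeries ℚ) = C (6:ℚ) from (map_ofNat (C (R := ℚ)) 6).symm,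
        show (2:PowerSeries ℚ) = C (2:ℚ) from (map_ofNat (C (R := ℚ)) 2).symm]
    ext n
    simp only [map_add, map_sub, coeff_mul_C, coeff_mul_X_pow', coeff_derivative, coeff_mk,
      map_zero]
    rcases n with _|_|_|_|m
    · norm_num [dd0, dd1]
    · norm_num [dd0, dd1, dd2]
    · norm_num [dd0, dd1, dd2, dd3]
    · norm_num [dd0, dd1, dd2, dd3, dd4]
    · simp only [show m+1+1+1+1 = m+4 from rfl]
      simp only [if_pos (show 1 ≤ m+4 from by omega), if_pos (show 2 ≤ m+4 from by omega),
        if_pos (show 3 ≤ m+4 from by omega), if_pos (show 4 ≤ m+4 from by omega),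
        show m+4-3 = m+1 from by omega, show m+4-2 = m+2 from by omega,
        show m+4-1 = m+3 from by omega, show m+4-4 = m from by omega]
      push_cast
      linear_combination 2 * ddrec m
  have hder : d⁄dX ℚ ((PowerSeries.mk dd) ^ 2 *
      ((X : PowerSeries ℚ) ^ 4 - 2 * X ^ 3 - X ^ 2 - 2 * X + 1)) = 0 := by
    rw [pow_two, Derivation.leibniz, Derivation.leibniz, hdQ]
    simp only [smul_eq_mul]
    linear_combination (PowerSeries.mk dd) * hZ
  have hconst : constantCoeff (R := ℚ) ((PowerSeries.mk dd) ^ 2 *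
      ((X : PowerSeries ℚ) ^ 4 - 2 * X ^ 3 - X ^ 2 - 2 * X + 1)) = constantCoeff (R := ℚ) 1 := by
    simp only [map_mul, map_pow, map_add, map_sub, map_one, constantCoeff_X, map_ofNat]
    rw [show constantCoeff (R := ℚ) (PowerSeries.mk dd) = dd 0 from rfl, dd0]
    norm_num
  exact derivative.ext (by rw [hder, Derivation.map_one_eq_zero]) hconst
end

section
/- Let (X_n) be integer-valued random variables with means μ_n and variances σ_n² → ∞, and let g be a probability density with sup_x |P(X_n = ⌊μ_n + x σ_n⌋)·σ_n − g(x)| → 0 as n → ∞ (uniformly in x). If X_n^{(1)}, ..., X_n^{(m)} are m independent copies of X_n, then σ_n^{m−1} · P(X_n^{(1)} = X_n^{(2)} = ... = X_n^{(m)}) → ∫_{−∞}^{∞} g(x)^m dx as n → ∞. -/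
open MeasureTheory

lemma aux_pow_diff (m : ℕ) (hm : 2 ≤ m) (D x y : ℝ) (hx0 : 0 ≤ x) (hxD : x ≤ D)
    (hy0 : 0 ≤ y) (hyD : y ≤ D) :
    |x ^ m - y ^ m| ≤ |x - y| * (m * (D ^ (m - 2) * (x + y))) := by
  have hD0 : 0 ≤ D := le_trans hx0 hxD
  have h : x ^ m - y ^ m = (∑ i ∈ Finset.range m, x ^ i * y ^ (m - 1 - i)) * (x - y) :=
    (geom_sum₂_mul x y m).symm
  rw [h, abs_mul, mul_comm]
  gcongr
  have hsum0 : 0 ≤ ∑ i ∈ Finset.range m, x ^ i * y ^ (m - 1 - i) :=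
    Finset.sum_nonneg fun i _ => mul_nonneg (pow_nonneg hx0 _) (pow_nonneg hy0 _)
  rw [abs_of_nonneg hsum0]
  calc ∑ i ∈ Finset.range m, x ^ i * y ^ (m - 1 - i)
      ≤ ∑ _i ∈ Finset.range m, D ^ (m - 2) * (x + y) := by
        apply Finset.sum_le_sum
        intro i hi
        rcases Nat.eq_zero_or_pos i with h0 | h1
        · subst h0
          have : y ^ (m - 1 - 0) = y ^ (m - 2) * y := by
            rw [← pow_succ]; congr 1; omega
          rw [this]
          simp only [pow_zero, one_mul]
          calc y ^ (m - 2) * y ≤ D ^ (m - 2) * y := by gcongr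
            _ ≤ D ^ (m - 2) * (x + y) := by
                apply mul_le_mul_of_nonneg_left (by linarith) (pow_nonneg hD0 _)
        · have hxi : x ^ i = x * x ^ (i - 1) := by
            rw [← pow_succ']; congr 1; omega
          have hi' : i < m := Finset.mem_range.1 hi
          calc x ^ i * y ^ (m - 1 - i) = x * (x ^ (i - 1) * y ^ (m - 1 - i)) := by
                rw [hxi]; ring
            _ ≤ x * (D ^ (i - 1) * D ^ (m - 1 - i)) := by
                apply mul_le_mul_of_nonneg_left _ hx0
                gcongr
            _ = x * D ^ (m - 2) := by rw [← pow_add]; congr 2; omega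
            _ ≤ D ^ (m - 2) * (x + y) := by
                rw [mul_comm]
                apply mul_le_mul_of_nonneg_left (by linarith) (pow_nonneg hD0 _)
    _ = m * (D ^ (m - 2) * (x + y)) := by
        rw [Finset.sum_const, Finset.card_range, nsmul_eq_mul]

lemma aux_main (m : ℕ) (hm : 2 ≤ m) (g : ℝ → ℝ) (hg_cont : Continuous g)
    (hg_nonneg : ∀ x, 0 ≤ g x) (hgi : Integrable g) (hg1 : (∫ x, g x) = 1)
    (C : ℝ) (hC0 : 0 ≤ C) (hgC : ∀ x, g x ≤ C)
    (p : ℤ → ℝ) (hp0 : ∀ k, 0 ≤ p k) (hps : HasSum p 1)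
    (σ μ ε : ℝ) (hσ : 0 < σ) (hε : 0 < ε) (hε1 : ε ≤ 1)
    (hclose : ∀ x : ℝ, |σ * p ⌊μ + x * σ⌋ - g x| ≤ ε) :
    |σ ^ (m - 1) * ∑' k, p k ^ m - ∫ x, g x ^ m| ≤ ε * (2 * m * (C + 1) ^ (m - 2)) := by
  set D := C + 1 with hD
  have hD1 : 1 ≤ D := by simp [hD]; linarith
  have hD0 : 0 ≤ D := by linarith
  set I : ℤ → Set ℝ := fun k => Set.Ico (((k : ℝ) - μ) / σ) (((k : ℝ) + 1 - μ) / σ) with hI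
  -- membership characterization
  have hmemI : ∀ (k : ℤ) (x : ℝ), x ∈ I k ↔ ⌊μ + x * σ⌋ = k := by
    intro k x
    rw [hI]
    simp only [Set.mem_Ico, div_le_iff₀ hσ, lt_div_iff₀ hσ, Int.floor_eq_iff]
    push_cast
    constructor <;> rintro ⟨h1, h2⟩ <;> constructor <;> linarith
  have hdisj : Pairwise (Function.onFun Disjoint I) := by
    intro k k' hne
    rw [Function.onFun, Set.disjoint_left]
    intro x hx hx'
    exact hne (((hmemI k x).1 hx).symm.trans ((hmemI k' x).1 hx'))
  have hcover : (⋃ k, I k) = Set.univ := by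
    ext x
    simp only [Set.mem_iUnion, Set.mem_univ, iff_true]
    exact ⟨⌊μ + x * σ⌋, (hmemI _ x).2 rfl⟩
  have hmeasI : ∀ k, MeasurableSet (I k) := fun k => measurableSet_Ico
  have hvolI : ∀ k, (volume (I k)).toReal = 1 / σ := by
    intro k
    rw [hI]
    simp only [Real.volume_Ico]
    rw [show ((k:ℝ) + 1 - μ) / σ - ((k:ℝ) - μ) / σ = 1 / σ by field_simp; ring]
    rw [ENNReal.toReal_ofReal (by positivity : (0:ℝ) ≤ 1/σ)]
  have hvolIlt : ∀ k, volume (I k) < ⊤ := fun k => measure_Ico_lt_top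
  -- bound on σ * p k
  have hpk : ∀ k, σ * p k ≤ D := by
    intro k
    have hx : μ + (((k : ℝ) - μ) / σ) * σ = (k : ℝ) := by field_simp; ring
    have h := hclose (((k : ℝ) - μ) / σ)
    rw [hx] at h
    rw [Int.floor_intCast] at h
    have h2 := abs_le.1 h
    have h3 := hgC (((k : ℝ) - μ) / σ)
    simp only [hD]
    linarith [h2.1]
  -- integrability of g^m
  have hgm_int : Integrable (fun x => g x ^ m) := by
    refine (hgi.const_mul (C ^ (m - 1))).mono' (hg_cont.pow m).aestronglyMeasurable ?_
    filter_upwards with x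
    rw [Real.norm_eq_abs, abs_of_nonneg (pow_nonneg (hg_nonneg x) m)]
    calc g x ^ m = g x ^ (m - 1) * g x := by rw [← pow_succ]; congr 1; omega
      _ ≤ C ^ (m - 1) * g x :=
          mul_le_mul_of_nonneg_right (pow_le_pow_left₀ (hg_nonneg x) (hgC x) _) (hg_nonneg x)
  -- hassum decompositions
  have hIg : HasSum (fun k => ∫ x in I k, g x) 1 := by
    have h := hasSum_integral_iUnion (μ := volume) (f := g) hmeasI hdisj
      (by rw [hcover]; exact hgi.integrableOn)
    rw [hcover] at h
    simpa [hg1] using h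
  have hIgm : HasSum (fun k => ∫ x in I k, g x ^ m) (∫ x, g x ^ m) := by
    have h := hasSum_integral_iUnion (μ := volume) (f := fun x => g x ^ m) hmeasI hdisj
      (by rw [hcover]; exact hgm_int.integrableOn)
    rw [hcover] at h
    simpa using h
  -- a as a set integral of a constant
  set a : ℤ → ℝ := fun k => σ ^ (m - 1) * p k ^ m with ha
  set b : ℤ → ℝ := fun k => ∫ x in I k, g x ^ m with hb
  have hσm : σ ^ m = σ ^ (m - 1) * σ := by rw [← pow_succ]; congr 1; omega
  have hak : ∀ k, a k = ∫ x in I k, (σ * p k) ^ m := by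
    intro k
    rw [setIntegral_const, measureReal_def, hvolI k, smul_eq_mul, mul_pow, hσm]
    field_simp
    ring
  -- per-piece bound
  have hab : ∀ k, |a k - b k| ≤ ε * (m * D ^ (m - 2)) * ((∫ x in I k, g x) + p k) := by
    intro k
    have hconst_int : IntegrableOn (fun _ : ℝ => (σ * p k) ^ m) (I k) volume :=
      integrableOn_const (hvolIlt k).ne
    have hgm_on : IntegrableOn (fun x => g x ^ m) (I k) volume := hgm_int.integrableOn
    rw [hak k, hb, ← integral_sub hconst_int hgm_on]
    have hble : ∀ x ∈ I k, |(σ * p k) ^ m - g x ^ m| ≤ ε * (m * (D ^ (m - 2) * (σ * p k + g x))) := by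
      intro x hx
      have hfl : ⌊μ + x * σ⌋ = k := (hmemI k x).1 hx
      have h1 := hclose x
      rw [hfl] at h1
      have h2 := aux_pow_diff m hm D (σ * p k) (g x)
        (mul_nonneg hσ.le (hp0 k)) (hpk k) (hg_nonneg x) (le_trans (hgC x) (by linarith))
      calc |(σ * p k) ^ m - g x ^ m| ≤ |σ * p k - g x| * (m * (D ^ (m - 2) * (σ * p k + g x))) := h2
        _ ≤ ε * (m * (D ^ (m - 2) * (σ * p k + g x))) := by
            apply mul_le_mul_of_nonneg_right h1
            have := hp0 k
            have := hg_nonneg x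
            have := hσ.le
            have := pow_nonneg hD0 (m - 2)
            positivity
    have hrhs_int : IntegrableOn (fun x => ε * (m * (D ^ (m - 2) * (σ * p k + g x)))) (I k) volume := by
      apply Integrable.const_mul
      apply Integrable.const_mul
      apply Integrable.const_mul
      exact (integrableOn_const (hvolIlt k).ne).add hgi.integrableOn
    calc |∫ x in I k, ((σ * p k) ^ m - g x ^ m)| ≤ ∫ x in I k, |(σ * p k) ^ m - g x ^ m| := by
          simpa [Real.norm_eq_abs] using
            norm_integral_le_integral_norm (μ := volume.restrict (I k))
              (f := fun x => (σ * p k) ^ m - g x ^ m)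
      _ ≤ ∫ x in I k, ε * (m * (D ^ (m - 2) * (σ * p k + g x))) := by
          apply setIntegral_mono_on ((hconst_int.sub hgm_on).abs) hrhs_int (hmeasI k) hble
      _ = ∫ x in I k, (ε * (↑m * D ^ (m - 2)) * (σ * p k) + ε * (↑m * D ^ (m - 2)) * g x) :=
          integral_congr_ae (Filter.Eventually.of_forall fun x => by ring)
      _ = ε * (m * D ^ (m - 2)) * ((∫ x in I k, g x) + p k) := by
          rw [integral_add (integrableOn_const (C := ε * (↑m * D ^ (m - 2)) * (σ * p k)) (hvolIlt k).ne)
              (hgi.integrableOn.const_mul _),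
            setIntegral_const, integral_const_mul, measureReal_def, hvolI k, smul_eq_mul]
          field_simp
          ring
  -- summabilities
  have hsa : Summable a := by
    refine Summable.of_nonneg_of_le (fun k => ?_) (fun k => ?_)
      (hps.summable.mul_left (D ^ (m - 1)))
    · exact mul_nonneg (pow_nonneg hσ.le _) (pow_nonneg (hp0 k) _)
    · have : a k = (σ * p k) ^ (m - 1) * p k := by
        have hpm : p k ^ m = p k ^ (m - 1) * p k := by rw [← pow_succ]; congr 1; omega
        show σ ^ (m - 1) * p k ^ m = _
        rw [mul_pow, hpm]; ring
      rw [this]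
      have h1 : (σ * p k) ^ (m - 1) ≤ D ^ (m - 1) :=
        pow_le_pow_left₀ (mul_nonneg hσ.le (hp0 k)) (hpk k) _
      exact mul_le_mul_of_nonneg_right h1 (hp0 k)
  have hsb : Summable b := hIgm.summable
  -- bound series
  set c : ℤ → ℝ := fun k => ε * (m * D ^ (m - 2)) * ((∫ x in I k, g x) + p k) with hc
  have hsc : HasSum c (ε * (m * D ^ (m - 2)) * (1 + 1)) :=
    (hIg.add hps).mul_left _
  -- final computation
  have key : σ ^ (m - 1) * ∑' k, p k ^ m - ∫ x, g x ^ m = ∑' k, (a k - b k) := by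
    rw [Summable.tsum_sub hsa hsb, ha]
    simp only []
    rw [tsum_mul_left, hb, hIgm.tsum_eq]
  rw [key]
  have habs : Summable fun k => |a k - b k| := by
    rw [summable_abs_iff]
    exact hsa.sub hsb
  calc |∑' k, (a k - b k)| ≤ ∑' k, |a k - b k| := by
        simpa [Real.norm_eq_abs] using norm_tsum_le_tsum_norm (f := fun k => a k - b k) habs
    _ ≤ ∑' k, c k := Summable.tsum_le_tsum hab habs hsc.summable
    _ = ε * (m * D ^ (m - 2)) * (1 + 1) := hsc.tsum_eq
    _ = ε * (2 * m * D ^ (m - 2)) := by ring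


open MeasureTheory ProbabilityTheory in
theorem stmt_13 {Ω : Type*} [MeasureSpace Ω] [IsProbabilityMeasure (ℙ : Measure Ω)]
    (m : ℕ) (hm : 2 ≤ m)
    (X : ℕ → Ω → ℤ) (Y : Fin m → ℕ → Ω → ℤ) (μn σn : ℕ → ℝ) (g : ℝ → ℝ)
    (hg_cont : Continuous g) (hg_nonneg : ∀ x, 0 ≤ g x)
    (hg_int : (∫ x, g x) = 1)
    (hmeas : ∀ i n, Measurable (Y i n))
    (hid : ∀ i n, IdentDistrib (Y i n) (X n))
    (hindep : ∀ n, iIndepFun (fun i => Y i n))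
    (hmean : ∀ n, (∫ ω, ((X n ω : ℝ))) = μn n)
    (hvar : ∀ n, variance (fun ω => (X n ω : ℝ)) ℙ = σn n ^ 2)
    (hσ : Filter.Tendsto σn Filter.atTop Filter.atTop)
    (hLLT : ∀ ε > 0, ∀ᶠ n in Filter.atTop, ∀ x : ℝ,
      |σn n * (ℙ {ω | X n ω = ⌊μn n + x * σn n⌋}).toReal - g x| ≤ ε) :
    Filter.Tendsto
      (fun n => σn n ^ (m - 1) *
        (ℙ {ω | ∀ i j : Fin m, Y i n ω = Y j n ω}).toReal)
      Filter.atTop (nhds (∫ x, g x ^ m)) := by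
  have i0 : Fin m := ⟨0, by omega⟩
  have hXae : ∀ n, AEMeasurable (X n) (ℙ : Measure Ω) := fun n => (hid i0 n).aemeasurable_snd
  -- total mass one
  have hsum1 : ∀ n, (∑' k : ℤ, (ℙ {ω | X n ω = k} : ENNReal)) = 1 := by
    intro n
    have hmap : ∀ k : ℤ, (ℙ : Measure Ω) {ω | X n ω = k} = ((ℙ : Measure Ω).map (X n)) {k} := by
      intro k
      rw [Measure.map_apply_of_aemeasurable (hXae n) (measurableSet_singleton k)]
      rfl
    simp_rw [hmap]
    have hprobmap : IsProbabilityMeasure ((ℙ : Measure Ω).map (X n)) :=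
      Measure.isProbabilityMeasure_map (hXae n)
    have hdisj : Pairwise (Function.onFun Disjoint fun k : ℤ => ({k} : Set ℤ)) := by
      intro k k' hkk'
      simpa [Function.onFun, Set.disjoint_singleton] using hkk'
    rw [← measure_iUnion hdisj (fun k : ℤ => measurableSet_singleton k),
      Set.iUnion_of_singleton, measure_univ]
  have hps : ∀ n, HasSum (fun k : ℤ => (ℙ {ω | X n ω = k}).toReal) 1 := by
    intro n
    have hne : (∑' k : ℤ, (ℙ {ω | X n ω = k} : ENNReal)) ≠ ⊤ := by
      rw [hsum1 n]; exact ENNReal.one_ne_top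
    have hs := ENNReal.summable_toReal hne
    have ht : (∑' k : ℤ, (ℙ {ω | X n ω = k}).toReal) = 1 := by
      rw [← ENNReal.tsum_toReal_eq (fun k => measure_ne_top _ _), hsum1 n, ENNReal.toReal_one]
    exact ht ▸ hs.hasSum
  -- probability of the diagonal event
  have hprob : ∀ n, (ℙ {ω | ∀ i j : Fin m, Y i n ω = Y j n ω}).toReal
      = ∑' k : ℤ, (ℙ {ω | X n ω = k}).toReal ^ m := by
    intro n
    have hset : {ω | ∀ i j : Fin m, Y i n ω = Y j n ω} = ⋃ k : ℤ, ⋂ i, Y i n ⁻¹' {k} := by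
      ext ω
      simp only [Set.mem_setOf_eq, Set.mem_iUnion, Set.mem_iInter, Set.mem_preimage,
        Set.mem_singleton_iff]
      exact ⟨fun h => ⟨Y i0 n ω, fun i => h i i0⟩, fun ⟨k, hk⟩ i j => (hk i).trans (hk j).symm⟩
    have hmeask : ∀ k : ℤ, MeasurableSet (⋂ i, Y i n ⁻¹' {k}) :=
      fun k => MeasurableSet.iInter fun i => (hmeas i n) (measurableSet_singleton k)
    have hdisj : Pairwise (Function.onFun Disjoint fun k : ℤ => ⋂ i, Y i n ⁻¹' {k}) := by
      intro k k' hne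
      rw [Function.onFun, Set.disjoint_left]
      intro ω hω hω'
      simp only [Set.mem_iInter, Set.mem_preimage, Set.mem_singleton_iff] at hω hω'
      exact hne ((hω i0).symm.trans (hω' i0))
    have hterm : ∀ k : ℤ, (ℙ : Measure Ω) (⋂ i, Y i n ⁻¹' {k}) = (ℙ {ω | X n ω = k}) ^ m := by
      intro k
      rw [(hindep n).meas_iInter (fun i => ⟨{k}, measurableSet_singleton k, rfl⟩)]
      have he : ∀ i : Fin m, (ℙ : Measure Ω) (Y i n ⁻¹' {k}) = ℙ {ω | X n ω = k} :=
        fun i => (hid i n).measure_mem_eq (measurableSet_singleton k)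
      simp only [he]
      rw [Finset.prod_const, Finset.card_univ, Fintype.card_fin]
    rw [hset, measure_iUnion hdisj hmeask]
    simp_rw [hterm]
    rw [ENNReal.tsum_toReal_eq (fun k => ENNReal.pow_ne_top (measure_ne_top _ _))]
    simp [ENNReal.toReal_pow]
  -- integrability of g
  have hgi : Integrable g := by
    by_contra h
    rw [integral_undef h] at hg_int
    norm_num at hg_int
  -- uniform bound on g
  obtain ⟨n1, hn1, hσ1⟩ := ((hLLT 1 one_pos).and (hσ.eventually_ge_atTop 0)).exists
  set C := σn n1 + 1 with hC
  have hC0 : 0 ≤ C := by simp only [hC]; linarith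
  have hgC : ∀ x, g x ≤ C := by
    intro x
    have h := abs_le.1 (hn1 x)
    have hP1 : (ℙ {ω | X n1 ω = ⌊μn n1 + x * σn n1⌋}).toReal ≤ 1 := by
      rw [← ENNReal.toReal_one]
      exact ENNReal.toReal_mono ENNReal.one_ne_top prob_le_one
    have hP0 : (0:ℝ) ≤ (ℙ {ω | X n1 ω = ⌊μn n1 + x * σn n1⌋}).toReal := ENNReal.toReal_nonneg
    simp only [hC]
    nlinarith [h.1]
  -- conclusion
  rw [Metric.tendsto_nhds]
  intro δ hδ
  set B := 2 * (m : ℝ) * (C + 1) ^ (m - 2) with hB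
  have hB0 : 0 ≤ B := by
    apply mul_nonneg (by positivity) (pow_nonneg (by linarith) _)
  set ε := min 1 (δ / (B + 1)) with hε
  have hε0 : 0 < ε := lt_min one_pos (div_pos hδ (by linarith))
  have hε1 : ε ≤ 1 := min_le_left _ _
  filter_upwards [hLLT ε hε0, hσ.eventually_gt_atTop 0] with n hn hσn
  rw [Real.dist_eq, hprob n]
  have key := aux_main m hm g hg_cont hg_nonneg hgi hg_int C hC0 hgC
    (fun k => (ℙ {ω | X n ω = k}).toReal) (fun k => ENNReal.toReal_nonneg) (hps n)
    (σn n) (μn n) ε hσn hε0 hε1 hn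
  have h1 : ε ≤ δ / (B + 1) := min_le_right _ _
  have h2 : ε * B ≤ δ / (B + 1) * B := mul_le_mul_of_nonneg_right h1 hB0
  have h3 : δ / (B + 1) * B < δ := by
    rw [div_mul_eq_mul_div, div_lt_iff₀ (by linarith)]
    nlinarith
  calc |σn n ^ (m - 1) * (∑' k : ℤ, (ℙ {ω | X n ω = k}).toReal ^ m) - ∫ x, g x ^ m|
      ≤ ε * (2 * m * (C + 1) ^ (m - 2)) := key
    _ = ε * B := by rw [hB]
    _ < δ := lt_of_le_of_lt h2 h3
end

section
/- If the allowed parts are two integers a ≠ b (with multiplicities α_i for a and β_i for b in the i-th composition), then the number of m-tuples of compositions of n all having the same number of parts is D_n(m) = sum over pairs (n_1, n_2) of nonnegative integers with n_1·a + n_2·b = n of binomial(n_1+n_2, n_1)^m · (α_1···α_m)^{n_1} · (β_1···β_m)^{n_2}. -/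
open Finset

private lemma aux_inl_getLeft {A B : Type*} (x : A ⊕ B) (h : x.isLeft) :
    Sum.inl (x.getLeft h) = x := by cases x <;> simp_all

private lemma aux_inr_getRight {A B : Type*} (x : A ⊕ B) (h : x.isRight) :
    Sum.inr (x.getRight h) = x := by cases x <;> simp_all

private lemma aux_countP_finRange {N : ℕ} (q : Fin N → Bool) :
    List.countP q (List.finRange N) = (Finset.univ.filter fun i => q i).card := by
  rw [List.countP_eq_length_filter]
  rw [show (Finset.univ : Finset (Fin N)) =
    ⟨(List.finRange N : Multiset (Fin N)), List.nodup_finRange N⟩ from rfl]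
  rw [Finset.filter]
  simp [Multiset.filter_coe]

private lemma aux_countP_left_add_right {A B : Type*} (w : List (A ⊕ B)) :
    w.countP Sum.isLeft + w.countP Sum.isRight = w.length := by
  rw [List.length_eq_countP_add_countP Sum.isLeft]
  congr 1
  apply List.countP_congr
  intro x _
  cases x <;> simp

private abbrev auxFun (N k : ℕ) (A B : Type) : Type :=
  {f : Fin N → A ⊕ B // (Finset.univ.filter fun i => (f i).isLeft).card = k}

private abbrev auxSig (N k : ℕ) (A B : Type) : Type :=
  (s : {s : Finset (Fin N) // s.card = k}) × ((↥s.1 → A) × (↥(s.1ᶜ) → B))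

private def auxPhi (N k : ℕ) (A B : Type) : auxSig N k A B → auxFun N k A B := fun x =>
  ⟨fun i => if hi : i ∈ x.1.1 then Sum.inl (x.2.1 ⟨i, hi⟩)
      else Sum.inr (x.2.2 ⟨i, Finset.mem_compl.2 hi⟩), by
    have h : (Finset.univ.filter fun i => (if hi : i ∈ x.1.1 then Sum.inl (x.2.1 ⟨i, hi⟩)
        else Sum.inr (x.2.2 ⟨i, Finset.mem_compl.2 hi⟩) : A ⊕ B).isLeft) = x.1.1 := by
      ext i
      simp only [Finset.mem_filter, Finset.mem_univ, true_and]
      split <;> simp_all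
    rw [h]
    exact x.1.2⟩

private lemma auxPhi_bij (N k : ℕ) (A B : Type) : Function.Bijective (auxPhi N k A B) := by
  constructor
  · rintro ⟨⟨s, hs⟩, g, h⟩ ⟨⟨s', hs'⟩, g', h'⟩ heq
    have hval := congrFun (congrArg Subtype.val heq)
    have hss : s = s' := by
      ext i
      by_cases hi : i ∈ s <;> by_cases hi' : i ∈ s' <;> simp only [hi, hi'] <;> try simp
      · have := hval i
        simp only [auxPhi, dif_pos hi, dif_neg hi'] at this
        exact absurd this (by simp)
      · have := hval i
        simp only [auxPhi, dif_neg hi, dif_pos hi'] at this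
        exact absurd this (by simp)
    subst hss
    have hg : g = g' := by
      funext ⟨i, hi⟩
      have := hval i
      simp only [auxPhi, dif_pos hi] at this
      exact Sum.inl.inj this
    have hh : h = h' := by
      funext ⟨i, hi⟩
      have hi2 : i ∉ s := Finset.mem_compl.1 hi
      have := hval i
      simp only [auxPhi, dif_neg hi2] at this
      exact Sum.inr.inj this
    subst hg; subst hh
    rfl
  · rintro ⟨f, hf⟩
    classical
    refine ⟨⟨⟨Finset.univ.filter fun i => (f i).isLeft, hf⟩,
      fun i => (f i.1).getLeft (Finset.mem_filter.1 i.2).2,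
      fun i => (f i.1).getRight (by
        have := i.2
        simp only [Finset.mem_compl, Finset.mem_filter, Finset.mem_univ, true_and] at this
        simpa [Sum.not_isLeft] using this)⟩, ?_⟩
    apply Subtype.ext
    funext i
    simp only [auxPhi]
    split
    · exact aux_inl_getLeft _ _
    · exact aux_inr_getRight _ _

private lemma aux_card_fun (N k : ℕ) (A B : Type) [Fintype A] [Fintype B] :
    Nat.card (auxFun N k A B) = N.choose k * Fintype.card A ^ k * Fintype.card B ^ (N - k) := by
  classical
  rw [← Nat.card_eq_of_bijective _ (auxPhi_bij N k A B)]
  rw [Nat.card_eq_fintype_card, Fintype.card_sigma]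
  have hterm : ∀ s : {s : Finset (Fin N) // s.card = k},
      Fintype.card ((↥s.1 → A) × (↥(s.1ᶜ) → B))
        = Fintype.card A ^ k * Fintype.card B ^ (N - k) := by
    rintro ⟨s, hs⟩
    rw [Fintype.card_prod, Fintype.card_fun, Fintype.card_fun, Fintype.card_coe,
      Fintype.card_coe, Finset.card_compl, hs, Fintype.card_fin]
  simp only [hterm]
  rw [Finset.sum_const, Finset.card_univ, Fintype.card_finset_len, Fintype.card_fin, smul_eq_mul,
    mul_assoc]

private lemma aux_countP_ofFn {N : ℕ} {T : Type*} (f : Fin N → T) (p : T → Bool) :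
    (List.ofFn f).countP p = (Finset.univ.filter fun i => p (f i)).card := by
  rw [List.ofFn_eq_map, List.countP_map, aux_countP_finRange]
  rfl

private lemma aux_card_lists (A B : Type) [Fintype A] [Fintype B] (n1 n2 : ℕ) :
    Nat.card {w : List (A ⊕ B) // w.countP Sum.isLeft = n1 ∧ w.countP Sum.isRight = n2}
      = (n1 + n2).choose n1 * Fintype.card A ^ n1 * Fintype.card B ^ n2 := by
  classical
  have key : Function.Bijective
      (fun f : {f : Fin (n1 + n2) → A ⊕ B //
          (Finset.univ.filter fun i => (f i).isLeft).card = n1} =>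
        (⟨List.ofFn f.1, by
          have h1 : (List.ofFn f.1).countP Sum.isLeft = n1 := by
            rw [aux_countP_ofFn]; exact f.2
          refine ⟨h1, ?_⟩
          have := aux_countP_left_add_right (List.ofFn f.1)
          rw [List.length_ofFn] at this
          omega⟩ :
        {w : List (A ⊕ B) // w.countP Sum.isLeft = n1 ∧ w.countP Sum.isRight = n2})) := by
    constructor
    · intro f g h
      exact Subtype.ext (List.ofFn_injective (congrArg Subtype.val h))
    · rintro ⟨w, h1, h2⟩
      have hw : w.length = n1 + n2 := by
        have := aux_countP_left_add_right w
        omega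
      have hofn : List.ofFn (fun i => w.get (Fin.cast hw.symm i)) = w := by
        apply List.ext_get
        · simp [hw]
        · intro i hi1 hi2
          simp [List.get_ofFn]
      refine ⟨⟨fun i => w.get (Fin.cast hw.symm i), ?_⟩, ?_⟩
      · rw [← aux_countP_ofFn (fun i => w.get (Fin.cast hw.symm i)) Sum.isLeft, hofn]
        exact h1
      · exact Subtype.ext hofn
  rw [← Nat.card_eq_of_bijective _ key, aux_card_fun]
  congr 2
  omega

private def auxDec (a b : ℕ) {α β : ℕ} : List (Fin α ⊕ Fin β) → List (ℕ × ℕ) :=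
  List.map (Sum.elim (fun c => (a, c.1)) (fun c => (b, c.1)))

private lemma auxDec_sum (a b : ℕ) {α β : ℕ} (w : List (Fin α ⊕ Fin β)) :
    ((auxDec a b w).map Prod.fst).sum
      = w.countP Sum.isLeft * a + w.countP Sum.isRight * b := by
  induction w with
  | nil => simp [auxDec]
  | cons x w ih =>
    cases x <;> simp [auxDec, List.countP_cons, Nat.add_mul] at ih ⊢ <;> omega

private lemma auxDec_length (a b : ℕ) {α β : ℕ} (w : List (Fin α ⊕ Fin β)) :
    (auxDec a b w).length = w.length := List.length_map _

private lemma auxDec_valid (a b : ℕ) {α β : ℕ} (w : List (Fin α ⊕ Fin β)) :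
    ∀ x ∈ auxDec a b w, (x.1 = a ∧ x.2 < α) ∨ (x.1 = b ∧ x.2 < β) := by
  intro x hx
  simp only [auxDec, List.mem_map] at hx
  obtain ⟨y, _, rfl⟩ := hx
  cases y with
  | inl c => exact Or.inl ⟨rfl, c.2⟩
  | inr c => exact Or.inr ⟨rfl, c.2⟩

private lemma auxDec_inj (a b : ℕ) (hab : a ≠ b) {α β : ℕ} :
    Function.Injective (auxDec a b (α := α) (β := β)) := by
  apply List.map_injective_iff.2
  rintro (c | c) (d | d) h <;> simp_all [Prod.ext_iff, Fin.ext_iff]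

private lemma auxDec_surj (a b : ℕ) {α β : ℕ} (l : List (ℕ × ℕ))
    (hl : ∀ x ∈ l, (x.1 = a ∧ x.2 < α) ∨ (x.1 = b ∧ x.2 < β)) :
    ∃ w, auxDec a b (α := α) (β := β) w = l := by
  induction l with
  | nil => exact ⟨[], rfl⟩
  | cons x l ih =>
    obtain ⟨w, hw⟩ := ih (fun y hy => hl y (List.mem_cons_of_mem _ hy))
    rcases hl x (List.mem_cons_self) with ⟨h1, h2⟩ | ⟨h1, h2⟩
    · exact ⟨Sum.inl ⟨x.2, h2⟩ :: w,
        by simp [auxDec] at hw ⊢; exact ⟨Prod.ext h1.symm rfl, hw⟩⟩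
    · exact ⟨Sum.inr ⟨x.2, h2⟩ :: w,
        by simp [auxDec] at hw ⊢; exact ⟨Prod.ext h1.symm rfl, hw⟩⟩

private lemma aux_counts_unique {a b : ℕ} (hab : a ≠ b) {n1 n2 n1' n2' n : ℕ}
    (h1 : n1 * a + n2 * b = n) (h2 : n1' * a + n2' * b = n) (hl : n1 + n2 = n1' + n2') :
    n1 = n1' ∧ n2 = n2' := by
  rcases le_total n1 n1' with h | h
  · obtain ⟨d, hd⟩ := Nat.le.dest h
    have hn2 : n2 = n2' + d := by omega
    have e2 : d * b = d * a := by
      subst hd; subst hn2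
      have e := h1.trans h2.symm
      ring_nf at e ⊢
      linarith
    rcases Nat.eq_zero_or_pos d with rfl | hd0
    · constructor <;> omega
    · exact absurd (Nat.eq_of_mul_eq_mul_left hd0 e2) (Ne.symm hab)
  · obtain ⟨d, hd⟩ := Nat.le.dest h
    have hn2 : n2' = n2 + d := by omega
    have e2 : d * b = d * a := by
      subst hd; subst hn2
      have e := h1.trans h2.symm
      ring_nf at e ⊢
      linarith
    rcases Nat.eq_zero_or_pos d with rfl | hd0
    · constructor <;> omega
    · exact absurd (Nat.eq_of_mul_eq_mul_left hd0 e2) (Ne.symm hab)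

private instance auxFiniteLists (A B : Type) [Fintype A] [Fintype B] (n1 n2 : ℕ) :
    Finite {w : List (A ⊕ B) // w.countP Sum.isLeft = n1 ∧ w.countP Sum.isRight = n2} := by
  apply Finite.of_injective
    (β := List.Vector (A ⊕ B) (n1 + n2))
    (fun w => ⟨w.1, by have := aux_countP_left_add_right w.1; omega⟩)
  intro u v h
  have h2 : u.1 = v.1 := congrArg (fun x : List.Vector (A ⊕ B) (n1 + n2) => x.1) h
  exact Subtype.ext h2

private abbrev mainG (a b n : ℕ) {m : ℕ} (α β : Fin m → ℕ) : Type :=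
  {g : ∀ i : Fin m, List (Fin (α i) ⊕ Fin (β i)) //
    (∀ i, (g i).countP Sum.isLeft * a + (g i).countP Sum.isRight * b = n) ∧
    ∀ i j, (g i).length = (g j).length}

private abbrev mainS {m : ℕ} (α β : Fin m → ℕ) (q : ℕ × ℕ) (i : Fin m) : Type :=
  {w : List (Fin (α i) ⊕ Fin (β i)) //
    w.countP Sum.isLeft = q.1 ∧ w.countP Sum.isRight = q.2}

private def mainF (a b n : ℕ) : Finset (ℕ × ℕ) :=
  (Finset.range (n + 1) ×ˢ Finset.range (n + 1)).filter fun q => q.1 * a + q.2 * b = n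

private def mainD (a b n : ℕ) {m : ℕ} (α β : Fin m → ℕ) :
    mainG a b n α β → {f : Fin m → List (ℕ × ℕ) //
      (∀ i, ((f i).map Prod.fst).sum = n ∧
        ∀ x ∈ f i, (x.1 = a ∧ x.2 < α i) ∨ (x.1 = b ∧ x.2 < β i)) ∧
      (∀ i j, (f i).length = (f j).length)} := fun g =>
  ⟨fun i => auxDec a b (g.1 i), by
    refine ⟨fun i => ⟨?_, auxDec_valid a b (g.1 i)⟩, fun i j => ?_⟩
    · rw [auxDec_sum]; exact g.2.1 i
    · rw [auxDec_length, auxDec_length]; exact g.2.2 i j⟩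

private lemma mainD_bij (a b n : ℕ) (hab : a ≠ b) {m : ℕ} (α β : Fin m → ℕ) :
    Function.Bijective (mainD a b n α β) := by
  constructor
  · intro g g' h
    apply Subtype.ext
    funext i
    exact auxDec_inj a b hab (congrFun (congrArg Subtype.val h) i)
  · rintro ⟨f, hf1, hf2⟩
    have hw : ∀ i, ∃ w : List (Fin (α i) ⊕ Fin (β i)), auxDec a b w = f i :=
      fun i => auxDec_surj a b (f i) (hf1 i).2
    choose w hw using hw
    refine ⟨⟨w, fun i => ?_, fun i j => ?_⟩, ?_⟩
    · rw [← auxDec_sum a b (w i), hw i]; exact (hf1 i).1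
    · rw [← auxDec_length a b (w i), ← auxDec_length a b (w j), hw i, hw j]
      exact hf2 i j
    · apply Subtype.ext
      funext i
      exact hw i

private def mainPsi (a b n : ℕ) {m : ℕ} (α β : Fin m → ℕ) :
    (Σ q : ↥(mainF a b n), ∀ i, mainS α β q.1 i) → mainG a b n α β := fun x =>
  ⟨fun i => (x.2 i).1, by
    have hq := (Finset.mem_filter.1 x.1.2).2
    refine ⟨fun i => ?_, fun i j => ?_⟩
    · show (x.2 i).1.countP Sum.isLeft * a + (x.2 i).1.countP Sum.isRight * b = n
      rw [(x.2 i).2.1, (x.2 i).2.2]; exact hq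
    · show (x.2 i).1.length = (x.2 j).1.length
      have h1 := aux_countP_left_add_right (x.2 i).1
      have h2 := aux_countP_left_add_right (x.2 j).1
      rw [(x.2 i).2.1, (x.2 i).2.2] at h1
      rw [(x.2 j).2.1, (x.2 j).2.2] at h2
      omega⟩

private lemma mainPsi_bij (a b n : ℕ) (ha : 0 < a) (hb : 0 < b) (hab : a ≠ b)
    {m : ℕ} (hm : 1 ≤ m) (α β : Fin m → ℕ) :
    Function.Bijective (mainPsi a b n α β) := by
  have i0 : Fin m := ⟨0, hm⟩
  constructor
  · rintro ⟨⟨q, hq⟩, u⟩ ⟨⟨q', hq'⟩, v⟩ h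
    have hval : ∀ i, (u i).1 = (v i).1 :=
      fun i => congrFun (congrArg Subtype.val h) i
    have hq1 : q = q' := by
      have e1 : q.1 = q'.1 := by rw [← (u i0).2.1, ← (v i0).2.1, hval i0]
      have e2 : q.2 = q'.2 := by rw [← (u i0).2.2, ← (v i0).2.2, hval i0]
      exact Prod.ext e1 e2
    subst hq1
    have huv : u = v := funext fun i => Subtype.ext (hval i)
    subst huv
    rfl
  · rintro ⟨g, hsum, hlen⟩
    have hqn : (g i0).countP Sum.isLeft * a + (g i0).countP Sum.isRight * b = n := hsum i0
    have hq1n : (g i0).countP Sum.isLeft ≤ n :=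
      le_trans (Nat.le_mul_of_pos_right _ ha) (Nat.le.intro hqn)
    have hq2n' : (g i0).countP Sum.isRight * b ≤ n := by omega
    have hq2n : (g i0).countP Sum.isRight ≤ n :=
      le_trans (Nat.le_mul_of_pos_right _ hb) hq2n'
    have hqF : ((g i0).countP Sum.isLeft, (g i0).countP Sum.isRight) ∈ mainF a b n := by
      rw [mainF]
      simp only [Finset.mem_filter, Finset.mem_product, Finset.mem_range]
      exact ⟨⟨by omega, by omega⟩, hqn⟩
    have hcounts : ∀ i, (g i).countP Sum.isLeft = (g i0).countP Sum.isLeft ∧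
        (g i).countP Sum.isRight = (g i0).countP Sum.isRight := by
      intro i
      refine aux_counts_unique hab (hsum i) hqn ?_
      have h1 := aux_countP_left_add_right (g i)
      have h2 := aux_countP_left_add_right (g i0)
      have h3 := hlen i i0
      omega
    exact ⟨⟨⟨((g i0).countP Sum.isLeft, (g i0).countP Sum.isRight), hqF⟩,
      fun i => ⟨g i, hcounts i⟩⟩, Subtype.ext rfl⟩

theorem stmt_17 (a b : ℕ) (ha : 0 < a) (hb : 0 < b) (hab : a ≠ b)
    (m : ℕ) (hm : 1 ≤ m) (α β : Fin m → ℕ) (n : ℕ) :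
    Nat.card {f : Fin m → List (ℕ × ℕ) //
      (∀ i, ((f i).map Prod.fst).sum = n ∧
        ∀ x ∈ f i, (x.1 = a ∧ x.2 < α i) ∨ (x.1 = b ∧ x.2 < β i)) ∧
      (∀ i j, (f i).length = (f j).length)} =
    ∑ q ∈ Finset.range (n + 1) ×ˢ Finset.range (n + 1),
      if q.1 * a + q.2 * b = n then
        Nat.choose (q.1 + q.2) q.1 ^ m * (∏ i, α i) ^ q.1 * (∏ i, β i) ^ q.2
      else 0 := by
  classical
  rw [← Nat.card_eq_of_bijective _ (mainD_bij a b n hab α β)]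
  rw [← Nat.card_eq_of_bijective _ (mainPsi_bij a b n ha hb hab hm α β)]
  letI : ∀ (q : ↥(mainF a b n)) (i : Fin m), Fintype (mainS α β q.1 i) :=
    fun q i => Fintype.ofFinite _
  rw [Nat.card_eq_fintype_card, Fintype.card_sigma]
  have hterm : ∀ q : ↥(mainF a b n), Fintype.card (∀ i, mainS α β q.1 i) =
      Nat.choose ((q : ℕ × ℕ).1 + (q : ℕ × ℕ).2) (q : ℕ × ℕ).1 ^ m
        * (∏ i, α i) ^ (q : ℕ × ℕ).1 * (∏ i, β i) ^ (q : ℕ × ℕ).2 := by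
    intro q
    rw [Fintype.card_pi]
    have hS : ∀ i : Fin m, Fintype.card (mainS α β q.1 i) =
        Nat.choose ((q : ℕ × ℕ).1 + (q : ℕ × ℕ).2) (q : ℕ × ℕ).1
          * α i ^ (q : ℕ × ℕ).1 * β i ^ (q : ℕ × ℕ).2 := by
      intro i
      rw [← Nat.card_eq_fintype_card,
        aux_card_lists (Fin (α i)) (Fin (β i)) (q : ℕ × ℕ).1 (q : ℕ × ℕ).2,
        Fintype.card_fin, Fintype.card_fin]
    simp only [hS]
    rw [Finset.prod_mul_distrib, Finset.prod_mul_distrib, Finset.prod_const, Finset.card_univ,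
      Fintype.card_fin, Finset.prod_pow, Finset.prod_pow]
  rw [Finset.sum_congr rfl fun q _ => hterm q]
  rw [Finset.sum_coe_sort (mainF a b n)
    (fun q => Nat.choose (q.1 + q.2) q.1 ^ m * (∏ i, α i) ^ q.1 * (∏ i, β i) ^ q.2)]
  rw [mainF, Finset.sum_filter]
end

section
/- For formal power series over a commutative ring, with p_1(z) = α z + β z² and p_2(z) = w/(1−w) substituted appropriately, the diagonal generating function of pairs of compositions (first with parts weighted by p_1, second unrestricted) is D(z) = 1/2 + (1/2)·(1 + αz)/√(1 − 2αz + z²(α² − 4β)); in particular for α = β = 1, D(z) = 1/2 + (1/2)·√((1+z)/(1−3z)), i.e. (2D(z) − 1)² (1 − 3z) = 1 + z. -/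
/-- Weighted generating function of pairs (composition of `n` with parts in {1,2},
part 1 weighted by `α` and part 2 by `β`; unrestricted composition of `n`) having the
same number of parts. -/
noncomputable def Dgen (R : Type*) [CommRing R] (α β : R) : PowerSeries R :=
  PowerSeries.mk fun n => ∑ k ∈ Finset.range (n + 1),
    (Nat.choose k (n - k) : R) * α ^ (2 * k - n) * β ^ (n - k) *
      (Nat.choose (n - 1) (k - 1) : R)

namespace StmtAux19

open Nat PowerSeries Finset


theorem natB (n m : ℕ) :
    (n+2) * ((2*(m+1)).choose (m+1) * (n+2).choose (2*(m+1)))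
      + (n+1) * ((2*(m+1)).choose (m+1) * n.choose (2*(m+1)))
    = (2*n+3) * ((2*(m+1)).choose (m+1) * (n+1).choose (2*(m+1)))
      + 4*(n+1) * ((2*m).choose m * n.choose (2*m)) := by
  rcases le_or_gt (2*m+2) n with h | h
  · obtain ⟨s, rfl⟩ : ∃ s, n = 2*m+2+s := ⟨n - (2*m+2), by omega⟩
    apply Nat.cast_injective (R := ℚ)
    push_cast
    rw [Nat.cast_choose ℚ (show m+1 ≤ 2*(m+1) by omega),
        Nat.cast_choose ℚ (show 2*(m+1) ≤ 2*m+2+s+2 by omega),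
        Nat.cast_choose ℚ (show 2*(m+1) ≤ 2*m+2+s by omega),
        Nat.cast_choose ℚ (show 2*(m+1) ≤ 2*m+2+s+1 by omega),
        Nat.cast_choose ℚ (show m ≤ 2*m by omega),
        Nat.cast_choose ℚ (show 2*m ≤ 2*m+2+s by omega)]
    have e1 : 2*(m+1) - (m+1) = m+1 := by omega
    have e2 : 2*m+2+s+2 - 2*(m+1) = s+2 := by omega
    have e3 : 2*m+2+s - 2*(m+1) = s := by omega
    have e4 : 2*m+2+s+1 - 2*(m+1) = s+1 := by omega
    have e5 : 2*m - m = m := by omega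
    have e6 : 2*m+2+s - 2*m = s+2 := by omega
    rw [e1, e2, e3, e4, e5, e6]
    have f1 : (2*m+2+s+2)! = (2*m+2+s+2) * ((2*m+2+s+1) * (2*m+2+s)!) := by
      rw [show 2*m+2+s+2 = (2*m+2+s+1)+1 by omega, factorial_succ,
         show 2*m+2+s+1+1 = 2*m+2+s+2 by omega,
         show 2*m+2+s+1 = (2*m+2+s)+1 by omega, factorial_succ]
    have f2 : (2*m+2+s+1)! = (2*m+2+s+1) * (2*m+2+s)! := by
      rw [show 2*m+2+s+1 = (2*m+2+s)+1 by omega, factorial_succ]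
    have f3 : (2*(m+1))! = (2*m+2) * ((2*m+1) * (2*m)!) := by
      rw [show 2*(m+1) = (2*m+1)+1 by omega, factorial_succ,
          show 2*m+1+1 = 2*m+2 by omega, factorial_succ]
    have f4 : (m+1)! = (m+1) * m ! := factorial_succ m
    have f5 : (s+2)! = (s+2) * ((s+1) * s !) := by
      rw [show s+2 = (s+1)+1 by omega, factorial_succ, factorial_succ]
    have f6 : (s+1)! = (s+1) * s ! := factorial_succ s
    rw [f1, f2, f3, f4, f5, f6]
    push_cast
    have h1 : ((2*m+2+s)! : ℚ) ≠ 0 := by positivity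
    have h2 : ((2*m)! : ℚ) ≠ 0 := by positivity
    have h3 : (m ! : ℚ) ≠ 0 := by positivity
    have h4 : (s ! : ℚ) ≠ 0 := by positivity
    field_simp
    ring
  rcases (show n = 2*m+1 ∨ n = 2*m ∨ n < 2*m by omega) with rfl | rfl | h2
  · rw [Nat.choose_eq_zero_of_lt (by omega : 2*m+1 < 2*(m+1))]
    apply Nat.cast_injective (R := ℚ)
    push_cast
    rw [Nat.cast_choose ℚ (show m+1 ≤ 2*(m+1) by omega),
        Nat.cast_choose ℚ (show 2*(m+1) ≤ 2*m+1+2 by omega),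
        Nat.cast_choose ℚ (show 2*(m+1) ≤ 2*m+1+1 by omega),
        Nat.cast_choose ℚ (show m ≤ 2*m by omega),
        Nat.cast_choose ℚ (show 2*m ≤ 2*m+1 by omega)]
    have e1 : 2*(m+1) - (m+1) = m+1 := by omega
    have e2 : 2*m+1+2 - 2*(m+1) = 1 := by omega
    have e3 : 2*m+1+1 - 2*(m+1) = 0 := by omega
    have e4 : 2*m - m = m := by omega
    have e5 : 2*m+1 - 2*m = 1 := by omega
    rw [e1, e2, e3, e4, e5]
    have f1 : (2*m+1+2)! = (2*m+3) * ((2*m+2) * ((2*m+1) * (2*m)!)) := by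
      rw [show 2*m+1+2 = (2*m+2)+1 by omega, factorial_succ,
          show 2*m+2+1 = 2*m+3 by omega,
          show 2*m+2 = (2*m+1)+1 by omega, factorial_succ,
          show 2*m+1+1 = 2*m+2 by omega,
          show 2*m+1 = (2*m)+1 by omega, factorial_succ]
    have f2 : (2*m+1+1)! = (2*m+2) * ((2*m+1) * (2*m)!) := by
      rw [show 2*m+1+1 = (2*m+1)+1 by omega, factorial_succ,
          show 2*m+1+1 = 2*m+2 by omega,
          show 2*m+1 = (2*m)+1 by omega, factorial_succ]
    have f3 : (2*(m+1))! = (2*m+2) * ((2*m+1) * (2*m)!) := by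
      rw [show 2*(m+1) = (2*m+1)+1 by omega, factorial_succ,
          show 2*m+1+1 = 2*m+2 by omega,
          show 2*m+1 = (2*m)+1 by omega, factorial_succ]
    have f4 : (m+1)! = (m+1) * m ! := factorial_succ m
    have f5 : (2*m+1)! = (2*m+1) * (2*m)! := by
      rw [show 2*m+1 = (2*m)+1 by omega, factorial_succ]
    rw [f1, f2, f3, f4, f5]
    push_cast
    have h1 : ((2*m)! : ℚ) ≠ 0 := by positivity
    have h3 : (m ! : ℚ) ≠ 0 := by positivity
    field_simp
    ring
  · rw [Nat.choose_eq_zero_of_lt (by omega : 2*m < 2*(m+1)),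
        Nat.choose_eq_zero_of_lt (by omega : 2*m+1 < 2*(m+1)),
        show (2*m+2).choose (2*(m+1)) = 1 by
          rw [show 2*(m+1) = 2*m+2 by ring, Nat.choose_self],
        show (2*m).choose (2*m) = 1 from Nat.choose_self _]
    apply Nat.cast_injective (R := ℚ)
    push_cast
    rw [Nat.cast_choose ℚ (show m+1 ≤ 2*(m+1) by omega),
        Nat.cast_choose ℚ (show m ≤ 2*m by omega)]
    have e1 : 2*(m+1) - (m+1) = m+1 := by omega
    have e4 : 2*m - m = m := by omega
    rw [e1, e4]
    have f3 : (2*(m+1))! = (2*m+2) * ((2*m+1) * (2*m)!) := by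
      rw [show 2*(m+1) = (2*m+1)+1 by omega, factorial_succ,
          show 2*m+1+1 = 2*m+2 by omega,
          show 2*m+1 = (2*m)+1 by omega, factorial_succ]
    have f4 : (m+1)! = (m+1) * m ! := factorial_succ m
    rw [f3, f4]
    push_cast
    have h1 : ((2*m)! : ℚ) ≠ 0 := by positivity
    have h3 : (m ! : ℚ) ≠ 0 := by positivity
    field_simp
    ring
  · rw [Nat.choose_eq_zero_of_lt (by omega : n+2 < 2*(m+1)),
        Nat.choose_eq_zero_of_lt (by omega : n < 2*(m+1)),
        Nat.choose_eq_zero_of_lt (by omega : n+1 < 2*(m+1)),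
        Nat.choose_eq_zero_of_lt (by omega : n < 2*m)]
    simp

theorem natA (n m : ℕ) (hn : 1 ≤ n) :
    2 * ((n-m).choose m * (n-1).choose m)
      = (2*m).choose m * (n.choose (2*m) + (n-1).choose (2*m)) := by
  rcases lt_or_ge n (2*m) with h | h
  · rw [Nat.choose_eq_zero_of_lt (show n-m < m by omega),
        Nat.choose_eq_zero_of_lt (show n < 2*m by omega),
        Nat.choose_eq_zero_of_lt (show n-1 < 2*m by omega)]
    simp
  rcases (show (∃ s, n = 2*m + s + 1) ∨ n = 2*m by
      rcases Nat.lt_or_ge (2*m) n with h' | h'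
      · exact Or.inl ⟨n - 2*m - 1, by omega⟩
      · exact Or.inr (by omega)) with ⟨s, rfl⟩ | rfl
  · have e1 : 2*m+s+1 - m = m+s+1 := by omega
    have e2 : 2*m+s+1 - 1 = 2*m+s := by omega
    rw [e1, e2]
    apply Nat.cast_injective (R := ℚ)
    push_cast
    rw [Nat.cast_choose ℚ (show m ≤ m+s+1 by omega),
        Nat.cast_choose ℚ (show m ≤ 2*m+s by omega),
        Nat.cast_choose ℚ (show m ≤ 2*m by omega),
        Nat.cast_choose ℚ (show 2*m ≤ 2*m+s+1 by omega),
        Nat.cast_choose ℚ (show 2*m ≤ 2*m+s by omega)]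
    have e3 : m+s+1 - m = s+1 := by omega
    have e4 : 2*m+s - m = m+s := by omega
    have e5 : 2*m - m = m := by omega
    have e6 : 2*m+s+1 - 2*m = s+1 := by omega
    have e7 : 2*m+s - 2*m = s := by omega
    rw [e3, e4, e5, e6, e7]
    have f1 : (m+s+1)! = (m+s+1) * (m+s)! := by
      rw [show m+s+1 = (m+s)+1 by omega, factorial_succ]
    have f2 : (2*m+s+1)! = (2*m+s+1) * (2*m+s)! := by
      rw [show 2*m+s+1 = (2*m+s)+1 by omega, factorial_succ]
    have f3 : (s+1)! = (s+1) * s ! := factorial_succ s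
    rw [f1, f2, f3]
    push_cast
    have h1 : ((2*m+s)! : ℚ) ≠ 0 := by positivity
    have h2 : ((m+s)! : ℚ) ≠ 0 := by positivity
    have h3 : (m ! : ℚ) ≠ 0 := by positivity
    have h4 : (s ! : ℚ) ≠ 0 := by positivity
    have h5 : ((2*m)! : ℚ) ≠ 0 := by positivity
    field_simp
    ring
  · -- n = 2*m, m ≥ 1
    obtain ⟨m', rfl⟩ : ∃ m', m = m' + 1 := ⟨m - 1, by omega⟩
    have e1 : 2*(m'+1) - (m'+1) = m'+1 := by omega
    have e2 : 2*(m'+1) - 1 = 2*m'+1 := by omega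
    rw [e1, e2, Nat.choose_self,
        Nat.choose_eq_zero_of_lt (show 2*m'+1 < 2*(m'+1) by omega),
        Nat.choose_self]
    have key : (2*(m'+1)).choose (m'+1) = 2 * (2*m'+1).choose (m'+1) := by
      rw [show 2*(m'+1) = (2*m'+1)+1 by omega, Nat.choose_succ_succ,
          Nat.choose_symm_half]
      ring
    rw [key]
    ring


def tc (n m : ℕ) : ℕ := (2*m).choose m * n.choose (2*m)

lemma tc_zero {n m : ℕ} (h : n < 2*m) : tc n m = 0 := by
  simp [tc, Nat.choose_eq_zero_of_lt h]

variable {R : Type*} [CommRing R]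

noncomputable def Tser (R : Type*) [CommRing R] (α β : R) : PowerSeries R :=
  PowerSeries.mk fun n => ∑ m ∈ range (n + 1), (tc n m : R) * α ^ (n - 2*m) * β ^ m

lemma coeff_Tser (α β : R) (n K : ℕ) (h : n + 1 ≤ K) :
    coeff n (Tser R α β) = ∑ m ∈ range K, (tc n m : R) * α ^ (n - 2*m) * β ^ m := by
  rw [Tser, coeff_mk]
  apply Finset.sum_subset (Finset.range_subset_range.2 h)
  intro x hx hx'
  simp only [Finset.mem_range, not_lt] at hx'
  rw [tc_zero (by omega)]
  simp

lemma trec (α β : R) (N : ℕ) :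
    ((N:R)+2) * coeff (N+2) (Tser R α β) + ((N:R)+1) * α^2 * coeff N (Tser R α β)
      = (2*(N:R)+3) * α * coeff (N+1) (Tser R α β)
        + 4*((N:R)+1) * β * coeff N (Tser R α β) := by
  set F : ℕ → R := fun m => if m = 0 then 0 else
    4*((N:R)+1) * (tc N (m-1) : R) * α ^ (N - 2*(m-1)) * β ^ m with hF
  have hRHS2 : 4*((N:R)+1) * β * coeff N (Tser R α β) = ∑ m ∈ range (N+3), F m := by
    rw [Finset.sum_range_succ' F (N+2)]
    have : F 0 = 0 := by simp [hF]
    rw [this, add_zero, coeff_Tser α β N (N+2) (by omega), Finset.mul_sum]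
    apply Finset.sum_congr rfl
    intro m _
    simp only [hF, Nat.succ_ne_zero, if_false, Nat.add_sub_cancel]
    ring
  rw [hRHS2, coeff_Tser α β (N+2) (N+3) (by omega), coeff_Tser α β N (N+3) (by omega),
      coeff_Tser α β (N+1) (N+3) (by omega), Finset.mul_sum, Finset.mul_sum, Finset.mul_sum,
      ← Finset.sum_add_distrib, ← Finset.sum_add_distrib]
  apply Finset.sum_congr rfl
  intro m _
  rcases m with _ | m'
  · simp only [hF, if_pos rfl, tc, Nat.mul_zero, Nat.choose_zero_right, Nat.choose_self,
      Nat.sub_zero, Nat.cast_one, pow_zero]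
    push_cast
    ring
  · have hB := natB N m'
    have hBR : (((N+2) * ((2*(m'+1)).choose (m'+1) * (N+2).choose (2*(m'+1)))
      + (N+1) * ((2*(m'+1)).choose (m'+1) * N.choose (2*(m'+1))) : ℕ) : R)
      = (((2*N+3) * ((2*(m'+1)).choose (m'+1) * (N+1).choose (2*(m'+1)))
      + 4*(N+1) * ((2*m').choose m' * N.choose (2*m')) : ℕ) : R) := by exact_mod_cast congrArg _ hB
    push_cast at hBR
    simp only [hF, Nat.succ_ne_zero, if_false, Nat.add_sub_cancel, tc]
    push_cast
    rcases le_or_gt (2*(m'+1)) N with h | h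
    · rw [show N+2-2*(m'+1) = N-2*(m'+1)+2 by omega,
          show N+1-2*(m'+1) = N-2*(m'+1)+1 by omega,
          show N-2*m' = N-2*(m'+1)+2 by omega]
      linear_combination (α ^ (N-2*(m'+1)+2) * β^(m'+1)) * hBR
    rcases (show N+1 = 2*(m'+1) ∨ N+2 = 2*(m'+1) ∨ N+2 < 2*(m'+1) by omega) with h2 | h2 | h2
    · have z1 : N.choose (2*(m'+1)) = 0 := Nat.choose_eq_zero_of_lt (by omega)
      rw [z1] at hBR ⊢
      rw [show N+2-2*(m'+1) = 1 by omega,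
          show N+1-2*(m'+1) = 0 by omega,
          show N-2*m' = 1 by omega]
      push_cast at hBR
      linear_combination (α * β^(m'+1)) * hBR
    · have z1 : N.choose (2*(m'+1)) = 0 := Nat.choose_eq_zero_of_lt (by omega)
      have z2 : (N+1).choose (2*(m'+1)) = 0 := Nat.choose_eq_zero_of_lt (by omega)
      rw [z1, z2] at hBR ⊢
      rw [show N+2-2*(m'+1) = 0 by omega, show N-2*m' = 0 by omega]
      push_cast at hBR
      linear_combination (β^(m'+1)) * hBR
    · have z1 : N.choose (2*(m'+1)) = 0 := Nat.choose_eq_zero_of_lt (by omega)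
      have z2 : (N+1).choose (2*(m'+1)) = 0 := Nat.choose_eq_zero_of_lt (by omega)
      have z3 : (N+2).choose (2*(m'+1)) = 0 := Nat.choose_eq_zero_of_lt (by omega)
      have z4 : N.choose (2*m') = 0 := Nat.choose_eq_zero_of_lt (by omega)
      rw [z1, z2, z3, z4]
      push_cast
      ring

lemma hT (α β : R) :
    (1 - 2*C α*X + C (α^2-4*β)*X^2) * d⁄dX R (Tser R α β)
      = (C α - C (α^2-4*β)*X) * Tser R α β := by
  set c := α^2 - 4*β with hc
  set T := Tser R α β with hTdef
  have lhs_eq : (1 - 2*C α*X + C c*X^2) * d⁄dX R T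
      = d⁄dX R T - C 2 * (C α * (X^1 * d⁄dX R T)) + C c * (X^2 * d⁄dX R T) := by
    rw [map_ofNat]
    ring
  have rhs_eq : (C α - C c*X) * T = C α * T - C c * (X^1 * T) := by
    ring
  rw [lhs_eq, rhs_eq]
  have h0 : coeff 0 T = 1 := by simp [Tser, hTdef, tc]
  have h1 : coeff 1 T = α := by simp [Tser, hTdef, Finset.sum_range_succ, tc]
  have h2 : coeff 2 T = α^2 + 2*β := by
    simp [Tser, hTdef, Finset.sum_range_succ, tc]
    norm_num [Nat.choose]
  ext n
  simp only [map_add, map_sub, coeff_C_mul, coeff_X_pow_mul', coeff_derivative]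
  rcases n with _ | n
  · norm_num
    rw [show constantCoeff T = 1 by rw [← coeff_zero_eq_constantCoeff]; exact h0, h1]
    ring
  rcases n with _ | n
  · norm_num
    rw [show constantCoeff T = 1 by rw [← coeff_zero_eq_constantCoeff]; exact h0,
        h1, h2, hc]
    push_cast
    ring
  · have e1 : (1:ℕ) ≤ n+2 := by omega
    have e2 : (2:ℕ) ≤ n+2 := by omega
    rw [if_pos e1, if_pos e2, if_pos e1]
    simp only [show n+2-1 = n+1 by omega, show n+2-2 = n by omega, coeff_derivative]
    have h := trec α β (n+1)
    rw [hc]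
    push_cast at h ⊢
    linear_combination h

lemma dQ (α β : R) : d⁄dX R (1 - 2*C α*X + C (α^2-4*β)*X^2)
    = -(2*C α) + C (α^2-4*β) * (2*X) := by
  have d2 : d⁄dX R (2:R⟦X⟧) = 0 := by
    rw [show (2:R⟦X⟧) = C 2 from (map_ofNat _ 2).symm, derivative_C]
  simp [pow_two, Derivation.leibniz, smul_eq_mul, d2]
  ring

lemma hD0 (α β : R) : d⁄dX R (Tser R α β^2 * (1 - 2*C α*X + C (α^2-4*β)*X^2)) = 0 := by
  have expand : d⁄dX R (Tser R α β^2 * (1 - 2*C α*X + C (α^2-4*β)*X^2))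
      = Tser R α β^2 * (d⁄dX R (1 - 2*C α*X + C (α^2-4*β)*X^2))
        + (1 - 2*C α*X + C (α^2-4*β)*X^2)*(2*Tser R α β*(d⁄dX R (Tser R α β))) := by
    simp [pow_two, Derivation.leibniz, smul_eq_mul]
    ring
  rw [expand, dQ]
  linear_combination (2*Tser R α β) * hT α β

lemma constCoeff_Tser (α β : R) : constantCoeff (Tser R α β) = 1 := by
  rw [← coeff_zero_eq_constantCoeff]
  simp [Tser, tc]

lemma hQT2 {R : Type*} [CommRing R] [IsAddTorsionFree R] (α β : R) :
    Tser R α β^2 * (1 - 2*C α*X + C (α^2-4*β)*X^2) = 1 := by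
  apply derivative.ext
  · rw [hD0]
    simp
  · simp [map_mul, map_pow, map_sub, map_add, constCoeff_Tser]

lemma map_Tser {S : Type*} [CommRing S] (psi : R →+* S) (α β : R) :
    PowerSeries.map psi (Tser R α β) = Tser S (psi α) (psi β) := by
  ext n
  simp [Tser, coeff_map, map_sum, map_mul, map_pow, map_natCast]

lemma hQT2' (α β : R) :
    Tser R α β^2 * (1 - 2*C α*X + C (α^2-4*β)*X^2) = 1 := by
  set psi : MvPolynomial (Fin 2) ℤ →+* R := MvPolynomial.eval₂Hom (Int.castRingHom R) ![α, β] with hpsi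
  have h := hQT2 (R := MvPolynomial (Fin 2) ℤ) (MvPolynomial.X 0) (MvPolynomial.X 1)
  have h2 := congrArg (PowerSeries.map psi) h
  rw [map_mul, map_pow, map_one, map_Tser] at h2
  simp only [map_add, map_sub, map_mul, map_one, PowerSeries.map_C, PowerSeries.map_X,
    map_ofNat, map_pow] at h2
  simpa [hpsi, MvPolynomial.eval₂Hom_X', map_ofNat] using h2

lemma hE (α β : R) : 2 * Dgen R α β - 1 = (1 + C α * X) * Tser R α β := by
  have two : (2:R⟦X⟧) = C 2 := (map_ofNat (C (R := R)) 2).symm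
  have expand : (1 + C α * X) * Tser R α β = Tser R α β + C α * (X^1 * Tser R α β) := by
    ring
  rw [two, expand]
  ext n
  simp only [map_add, map_sub, coeff_C_mul, coeff_X_pow_mul', coeff_one, Dgen, coeff_mk]
  rcases n with _ | N
  · rw [if_pos rfl, if_neg (by omega : ¬(1:ℕ) ≤ 0), coeff_Tser α β 0 1 le_rfl]
    simp [tc]
    norm_num
  · rw [if_neg (by omega : ¬(N+1 = 0)), if_pos (by omega : (1:ℕ) ≤ N+1), sub_zero,
        show N+1-1 = N from rfl,
        coeff_Tser α β (N+1) (N+2) le_rfl, coeff_Tser α β N (N+2) (by omega),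
        ← Finset.sum_range_reflect (fun k => (Nat.choose k (N+1-k) : R) * α ^ (2*k-(N+1))
            * β ^ (N+1-k) * (Nat.choose N (k-1) : R)) (N+2),
        Finset.mul_sum, Finset.mul_sum, ← Finset.sum_add_distrib]
  -- termwise
    apply Finset.sum_congr rfl
    intro m hm
    simp only [Finset.mem_range] at hm
    simp only [show N+2-1 = N+1 from rfl]
    rcases (show m = N+1 ∨ m ≤ N by omega) with rfl | hmN
    · rw [show N+1-(N+1) = 0 by omega, Nat.choose_eq_zero_of_lt (by omega : 0 < N+1-0),
          tc_zero (by omega), tc_zero (by omega)]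
      push_cast
      ring
    · rw [show N+1-(N+1-m) = m by omega, show N+1-m-1 = N-m by omega,
          Nat.choose_symm hmN]
      have hA := natA (N+1) m (by omega)
      rw [show N+1-1 = N from rfl] at hA
      rcases (show 2*m ≤ N ∨ 2*m = N+1 ∨ N+1 < 2*m by omega) with h | h | h
      · have hAR : ((2 * ((N+1-m).choose m * N.choose m) : ℕ) : R)
            = (((2*m).choose m * ((N+1).choose (2*m) + N.choose (2*m)) : ℕ) : R) := by
          exact_mod_cast congrArg _ hA
        push_cast at hAR
        rw [show 2*(N+1-m)-(N+1) = N-2*m+1 by omega, show N+1-2*m = N-2*m+1 by omega]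
        simp only [tc]
        push_cast
        linear_combination (α^(N-2*m+1) * β^m) * hAR
      · have z : N.choose (2*m) = 0 := Nat.choose_eq_zero_of_lt (by omega)
        rw [z] at hA
        have hAR : ((2 * ((N+1-m).choose m * N.choose m) : ℕ) : R)
            = (((2*m).choose m * ((N+1).choose (2*m) + 0) : ℕ) : R) := by
          exact_mod_cast congrArg _ hA
        push_cast at hAR
        rw [show 2*(N+1-m)-(N+1) = 0 by omega, show N+1-2*m = 0 by omega]
        simp only [tc, z]
        push_cast
        linear_combination (β^m) * hAR
      · rw [Nat.choose_eq_zero_of_lt (show N+1-m < m by omega),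
            tc_zero (by omega), tc_zero (by omega)]
        push_cast
        ring

lemma main (R : Type*) [CommRing R] (α β : R) :
    (2 * Dgen R α β - 1) ^ 2 *
        (1 - 2 * C α * X + C (α ^ 2 - 4 * β) * X ^ 2) =
      (1 + C α * X) ^ 2 := by
  rw [hE]
  have h := hQT2' α β
  linear_combination ((1 + C α * X)^2) * h

end StmtAux19

open PowerSeries in
theorem stmt_19 (R : Type*) [CommRing R] (α β : R) :
    (2 * Dgen R α β - 1) ^ 2 *
        (1 - 2 * C α * X + C (α ^ 2 - 4 * β) * X ^ 2) =
      (1 + C α * X) ^ 2 ∧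
    (2 * Dgen R 1 1 - 1) ^ 2 * (1 - 3 * X) = 1 + X := by
  constructor
  · exact StmtAux19.main R α β
  · have h1 := StmtAux19.main R 1 1
    rw [map_one] at h1
    have e3 : C ((1:R)^2 - 4*1) = -3 := by
      rw [show ((1:R)^2 - 4*1) = -(3:R) by ring, map_neg, map_ofNat]
    rw [e3] at h1
    have hu : IsUnit (1 + X : R⟦X⟧) := by
      rw [PowerSeries.isUnit_iff_constantCoeff]
      simp
    have key : (1 + X) * ((2 * Dgen R 1 1 - 1) ^ 2 * (1 - 3*X)) = (1 + X) * (1 + X) := by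
      linear_combination h1
    exact hu.mul_left_cancel key
end
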